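/- arXiv:1211.6484 — 8 statements merged into one kernel-verified Lean document; each statement's English description precedes it below -/
import Mathlib

section
/- Let F be a field, F ∈ F[x₁,…,xₙ] a polynomial with deg(F) ≤ d₁+⋯+dₙ, and A₁,…,Aₙ ⊆ F finite subsets with |Aᵢ| = dᵢ+1. Then the coefficient of the monomial x₁^{d₁}⋯xₙ^{dₙ} in F equals ∑_{c₁∈A₁}⋯∑_{cₙ∈Aₙ} F(c₁,…,cₙ)/(φ₁'(c₁)⋯φₙ'(cₙ)), where φᵢ(z) = ∏_{a∈Aᵢ}(z−a). -/
open Finset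

open Polynomial in
/-- One-variable key lemma: the interpolation functional extracts the degree-`d`
coefficient of `X^k` for `k ≤ d`. -/
lemma cn_single_var {F : Type*} [Field F] (A : Finset F) (d k : ℕ)
    (hA : A.card = d + 1) (hk : k ≤ d) :
    ∑ c ∈ A, c ^ k / Polynomial.eval c
        (Polynomial.derivative (∏ a ∈ A, (Polynomial.X - Polynomial.C a))) =
      if k = d then 1 else 0 := by
  classical
  have hinj : Set.InjOn (id : F → F) A := Function.injective_id.injOn
  have hnodal : (∏ a ∈ A, (X - C a)) = Lagrange.nodal A id := by
    simp [Lagrange.nodal]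
  have hX : (X : F[X]) ^ k = Lagrange.interpolate A id (fun c => c ^ k) := by
    refine Lagrange.eq_interpolate_of_eval_eq _ hinj ?_ ?_
    · rw [hA, degree_X_pow]
      exact_mod_cast Nat.lt_succ_of_le hk
    · intro i _; simp
  have hcoeff : ∀ c ∈ A, (Lagrange.basis A id c).coeff d = Lagrange.nodalWeight A id c := by
    intro c hc
    rw [Lagrange.basis_eq_prod_sub_inv_mul_nodal_div hc,
      ← Lagrange.nodal_erase_eq_nodal_div hc, coeff_C_mul]
    have hmon : (Lagrange.nodal (A.erase c) id).Monic := Lagrange.nodal_monic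
    have hdeg : (Lagrange.nodal (A.erase c) id).natDegree = d := by
      rw [Lagrange.natDegree_nodal, card_erase_of_mem hc, hA]
      omega
    rw [← hdeg, hmon.coeff_natDegree, mul_one]
  have := congrArg (fun p : F[X] => p.coeff d) hX
  simp only [coeff_X_pow, Lagrange.interpolate_apply, finset_sum_coeff, coeff_C_mul] at this
  rw [show (if d = k then (1:F) else 0) = if k = d then 1 else 0 by simp [eq_comm]] at this
  rw [this]
  refine Finset.sum_congr rfl fun c hc => ?_
  rw [hcoeff c hc, hnodal, Lagrange.nodalWeight_eq_eval_derivative_nodal hc,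
    div_eq_mul_inv]
  rfl

/-- Effective Combinatorial Nullstellensatz (Lasoń; Karasev–Petrov):
the coefficient of `∏ xᵢ^{dᵢ}` in a polynomial of total degree at most `∑ dᵢ`
is given by the interpolation sum over any grid `A₁ × ⋯ × Aₙ` with `|Aᵢ| = dᵢ + 1`. -/
theorem effective_combinatorial_nullstellensatz
    {F : Type*} [Field F] (n : ℕ) (d : Fin n → ℕ) (A : Fin n → Finset F)
    (hA : ∀ i, (A i).card = d i + 1)
    (P : MvPolynomial (Fin n) F)
    (hdeg : P.totalDegree ≤ ∑ i, d i) :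
    MvPolynomial.coeff (Finsupp.equivFunOnFinite.symm d) P =
      ∑ c ∈ Fintype.piFinset A,
        MvPolynomial.eval c P /
          ∏ i, Polynomial.eval (c i)
            (Polynomial.derivative (∏ a ∈ A i, (Polynomial.X - Polynomial.C a))) := by
  classical
  set φ' : Fin n → F → F := fun i x => Polynomial.eval x
      (Polynomial.derivative (∏ a ∈ A i, (Polynomial.X - Polynomial.C a))) with hφ'
  have step1 :
      ∑ c ∈ Fintype.piFinset A, MvPolynomial.eval c P / ∏ i, φ' i (c i) =
        ∑ m ∈ P.support, MvPolynomial.coeff m P *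
          ∏ i, ∑ x ∈ A i, x ^ m i / φ' i x := by
    have : ∀ c : Fin n → F,
        MvPolynomial.eval c P / ∏ i, φ' i (c i) =
          ∑ m ∈ P.support, MvPolynomial.coeff m P * ∏ i, (c i ^ m i / φ' i (c i)) := by
      intro c
      rw [MvPolynomial.eval_eq', Finset.sum_div]
      refine Finset.sum_congr rfl fun m _ => ?_
      rw [mul_div_assoc, ← Finset.prod_div_distrib]
    simp_rw [this]
    rw [Finset.sum_comm]
    refine Finset.sum_congr rfl fun m _ => ?_
    rw [← Finset.mul_sum, Finset.prod_univ_sum]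
  rw [step1]
  set t : Fin n →₀ ℕ := Finsupp.equivFunOnFinite.symm d with ht
  have htapp : ∀ i, t i = d i := fun i => rfl
  have key : ∀ m ∈ P.support,
      MvPolynomial.coeff m P * ∏ i, ∑ x ∈ A i, x ^ m i / φ' i x =
        if m = t then MvPolynomial.coeff m P else 0 := by
    intro m hm
    by_cases hmt : m = t
    · subst hmt
      rw [if_pos rfl]
      have h1 : ∀ i, (∑ x ∈ A i, x ^ t i / φ' i x) = 1 := by
        intro i
        rw [htapp i, cn_single_var (A i) (d i) (d i) (hA i) le_rfl, if_pos rfl]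
      rw [Finset.prod_congr rfl fun i _ => h1 i, Finset.prod_const_one, mul_one]
    · rw [if_neg hmt]
      -- find i with m i < d i
      have hsum : ∑ i, m i ≤ ∑ i, d i := by
        calc ∑ i, m i = m.sum fun _ e => e :=
              (Finsupp.sum_fintype m (fun _ e => e) fun _ => rfl).symm
        _ ≤ P.totalDegree := MvPolynomial.le_totalDegree hm
        _ ≤ ∑ i, d i := hdeg
      have hex : ∃ i, m i < d i := by
        by_contra h
        push_neg at h
        have hne : ∃ j, d j < m j := by
          by_contra h2
          push_neg at h2
          apply hmt
          ext i
          exact le_antisymm (h2 i) (h i)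
        obtain ⟨j, hj⟩ := hne
        have : ∑ i, d i < ∑ i, m i :=
          Finset.sum_lt_sum (fun i _ => h i) ⟨j, Finset.mem_univ j, hj⟩
        omega
      obtain ⟨i, hi⟩ := hex
      have : (∑ x ∈ A i, x ^ m i / φ' i x) = 0 := by
        rw [cn_single_var (A i) (d i) (m i) (hA i) hi.le, if_neg hi.ne]
      rw [Finset.prod_eq_zero (Finset.mem_univ i) this, mul_zero]
  rw [Finset.sum_congr rfl key, Finset.sum_ite_eq' P.support t (fun m => MvPolynomial.coeff m P)]
  by_cases hts : t ∈ P.support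
  · rw [if_pos hts]
  · rw [if_neg hts, MvPolynomial.notMem_support_iff.mp hts]
end

section
/- Let a₁,…,aₙ be positive integers, σ = a₁+⋯+aₙ, σᵢ = a₁+⋯+a_{i−1} (so σ₁ = 0). Suppose integers α₁,…,αₙ satisfy 0 ≤ αᵢ ≤ σ−aᵢ for all i, and for every pair i < j either α_j − αᵢ ≥ aᵢ or αᵢ − α_j ≥ a_j + 1. Then αᵢ = σᵢ for every i. -/
open Finset

/-- Claim 1 (combinatorial core) of the Károlyi–Nagy proof of the q-Dyson theorem:
if `0 ≤ αᵢ ≤ σ - aᵢ` and for each pair `i < j` either `α_j - αᵢ ≥ aᵢ` or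
`αᵢ - α_j ≥ a_j + 1`, then `αᵢ = σᵢ = a₁ + ⋯ + a_{i-1}` for every `i`. -/
theorem q_dyson_exponent_rigidity
    (n : ℕ) (a : Fin n → ℤ) (ha : ∀ i, 0 < a i)
    (α : Fin n → ℤ)
    (hlb : ∀ i, 0 ≤ α i) (hub : ∀ i, α i ≤ (∑ j, a j) - a i)
    (hgap : ∀ i j, i < j → a i ≤ α j - α i ∨ a j + 1 ≤ α i - α j) :
    ∀ i, α i = ∑ j ∈ Finset.Iio i, a j := by
  classical
  set σ : ℤ := ∑ j, a j with hσ
  set s : Fin n → ℤ := fun i => ∑ j ∈ Finset.Iio i, a j with hs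
  have hsnonneg : ∀ i, 0 ≤ s i := fun i => Finset.sum_nonneg fun j _ => (ha j).le
  -- s i + a i is the sum over Iic i
  have hse : ∀ i : Fin n, s i + a i = ∑ j ∈ Finset.Iic i, a j := by
    intro i
    rw [← Finset.Iio_insert, Finset.sum_insert (by simp), hs]
    ring
  -- monotonicity: if m < i then s m + a m ≤ s i
  have hmono : ∀ m i : Fin n, m < i → s m + a m ≤ s i := by
    intro m i hmi
    rw [hse m, hs]
    apply Finset.sum_le_sum_of_subset_of_nonneg
    · intro x hx
      simp only [Finset.mem_Iic] at hx
      simp only [Finset.mem_Iio]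
      exact lt_of_le_of_lt hx hmi
    · exact fun j _ _ => (ha j).le
  have hetot : ∀ i : Fin n, s i + a i ≤ σ := by
    intro i
    rw [hse i, hσ]
    apply Finset.sum_le_sum_of_subset_of_nonneg (Finset.subset_univ _)
    exact fun j _ _ => (ha j).le
  -- disjointness of the intervals
  have hdisj : ∀ i j : Fin n, i ≠ j →
      Disjoint (Finset.Ico (α i) (α i + a i)) (Finset.Ico (α j) (α j + a j)) := by
    intro i j hij
    rw [Finset.disjoint_left]
    intro x hx hx'
    simp only [Finset.mem_Ico] at hx hx'
    rcases lt_or_gt_of_ne hij with h | h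
    · rcases hgap i j h with hg | hg <;> omega
    · rcases hgap j i h with hg | hg <;> omega
  -- coverage: the intervals tile [0, σ)
  have hcover : (Finset.univ.biUnion fun i => Finset.Ico (α i) (α i + a i))
      = Finset.Ico (0 : ℤ) σ := by
    apply Finset.eq_of_subset_of_card_le
    · intro x hx
      simp only [Finset.mem_biUnion, Finset.mem_Ico] at hx ⊢
      obtain ⟨i, _, h1, h2⟩ := hx
      have := hlb i
      have := hub i
      omega
    · rw [Finset.card_biUnion (fun i _ j _ hij => hdisj i j hij)]
      have h1 : ∀ i ∈ Finset.univ, (Finset.Ico (α i) (α i + a i)).card = (a i).toNat := by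
        intro i _
        rw [Int.card_Ico]
        congr 1
        ring
      rw [Finset.sum_congr rfl h1, Int.card_Ico]
      have h2 : ((∑ i, (a i).toNat : ℕ) : ℤ) = σ := by
        rw [Nat.cast_sum, hσ]
        exact Finset.sum_congr rfl fun i _ => Int.toNat_of_nonneg (ha i).le
      omega
  have hmem : ∀ t : ℤ, 0 ≤ t → t < σ → ∃ m, α m ≤ t ∧ t < α m + a m := by
    intro t h0 h1
    have : t ∈ Finset.Ico (0 : ℤ) σ := Finset.mem_Ico.mpr ⟨h0, h1⟩
    rw [← hcover] at this
    simp only [Finset.mem_biUnion, Finset.mem_Ico] at this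
    obtain ⟨m, _, hm1, hm2⟩ := this
    exact ⟨m, hm1, hm2⟩
  -- predecessor: each interval with positive start is preceded by one of smaller index
  have hpred : ∀ i : Fin n, 0 < α i → ∃ m, m < i ∧ α m + a m = α i := by
    intro i hpos
    obtain ⟨m, hm1, hm2⟩ := hmem (α i - 1) (by omega)
      (by have := hub i; have := ha i; omega)
    have hmi : m ≠ i := by
      intro h; subst h; omega
    have hend : α m + a m = α i := by
      rcases le_or_gt (α m + a m) (α i) with h | h
      · omega
      · exfalso
        have hd := hdisj m i hmi
        rw [Finset.disjoint_left] at hd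
        exact hd (Finset.mem_Ico.mpr ⟨by omega, h⟩)
          (Finset.mem_Ico.mpr ⟨le_refl _, by have := ha i; omega⟩)
    refine ⟨m, ?_, hend⟩
    rcases lt_or_gt_of_ne hmi with h | h
    · exact h
    · exfalso
      have hai := ha i
      have ham := ha m
      rcases hgap i m h with hg | hg <;> omega
  -- upper bound: α i ≤ s i, by strong induction on α i
  have hub2 : ∀ i, α i ≤ s i := by
    suffices H : ∀ N : ℕ, ∀ i : Fin n, (α i).toNat ≤ N → α i ≤ s i by
      intro i; exact H (α i).toNat i le_rfl
    intro N
    induction N with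
    | zero =>
      intro i h
      have := hlb i
      have h0 : α i = 0 := by omega
      rw [h0]; exact hsnonneg i
    | succ N ih =>
      intro i h
      rcases eq_or_lt_of_le (hlb i) with h0 | h0
      · rw [← h0]; exact hsnonneg i
      · obtain ⟨m, hmi, hend⟩ := hpred i h0
        have h1 : α m ≤ s m := ih m (by have := ha m; have := hlb m; omega)
        have h2 : s m + a m ≤ s i := hmono m i hmi
        omega
  -- main step: downward induction
  have step : ∀ i : Fin n, (∀ j, i < j → α j = s j) → α i = s i := by
    intro i hj
    have hai := ha i
    obtain ⟨m, hm1, hm2⟩ := hmem (s i + a i - 1)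
      (by have := hsnonneg i; omega) (by have := hetot i; omega)
    rcases lt_trichotomy m i with h | h | h
    · exfalso
      have h2 := hmono m i h
      have h3 := hub2 m
      omega
    · subst h
      have := hub2 m
      omega
    · exfalso
      have h2 := hmono i m h
      have h3 := hj m h
      omega
  have main : ∀ N : ℕ, ∀ i : Fin n, n - i.val ≤ N → α i = s i := by
    intro N
    induction N with
    | zero =>
      intro i h
      exact absurd h (by have := i.isLt; omega)
    | succ N ih =>
      intro i h
      apply step
      intro j hij
      have hij' : i.val < j.val := hij
      exact ih j (by have := j.isLt; omega)
  intro i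
  exact main n i (by omega)
end

section
/- Let a₁,…,aₙ be positive integers, σ = ∑aᵢ, σᵢ = ∑_{j<i} a_j, and let q be an indeterminate over ℚ. Define F(x₁,…,xₙ) = ∏_{1≤i<j≤n} [∏_{t=0}^{aᵢ−1}(x_j − xᵢ q^t) · ∏_{t=1}^{a_j}(xᵢ − x_j q^t)]. If c₁,…,cₙ with cᵢ ∈ {1, q, q², …, q^{σ−aᵢ}} satisfy F(c₁,…,cₙ) ≠ 0 in ℚ(q), then cᵢ = q^{σᵢ} for all i. -/
open Finset MvPolynomial

/-- Vanishing claim for the q-Dyson polynomial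
`F = ∏_{i<j} [∏_{t=0}^{aᵢ-1}(x_j - xᵢ qᵗ) · ∏_{t=1}^{a_j}(xᵢ - x_j qᵗ)]`:
if each `cᵢ` lies in the geometric grid `{1, q, …, q^{σ-aᵢ}}` and `F(c) ≠ 0`,
then `cᵢ = q^{σᵢ}` where `σᵢ = a₁ + ⋯ + a_{i-1}`. -/
theorem q_dyson_vanishing
    (n : ℕ) (a : Fin n → ℕ) (ha : ∀ i, 0 < a i)
    (c : Fin n → RatFunc ℚ)
    (hc : ∀ i, ∃ m : ℕ, m ≤ (∑ j, a j) - a i ∧ c i = RatFunc.X ^ m)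
    (hF : MvPolynomial.eval c
        (∏ p ∈ Finset.univ.filter (fun p : Fin n × Fin n => p.1 < p.2),
          ((∏ t ∈ Finset.range (a p.1), (X p.2 - C ((RatFunc.X : RatFunc ℚ) ^ t) * X p.1)) *
           (∏ t ∈ Finset.range (a p.2), (X p.1 - C ((RatFunc.X : RatFunc ℚ) ^ (t + 1)) * X p.2))))
      ≠ 0) :
    ∀ i, c i = RatFunc.X ^ (∑ j ∈ Finset.Iio i, a j) := by
    classical
  choose m hm1 hm2 using hc
  set σ := ∑ j, a j with hσdef
  have haσ : ∀ i, a i ≤ σ := fun i =>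
    Finset.single_le_sum (fun j _ => Nat.zero_le _) (Finset.mem_univ i)
  have hmσ : ∀ i, m i + a i ≤ σ := by
    intro i; have := hm1 i; have := haσ i; omega
  -- extract per-pair nonvanishing
  rw [map_prod] at hF
  have h0 := Finset.prod_ne_zero_iff.mp hF
  have hpair : ∀ i j : Fin n, i < j →
      (∀ t < a i, (RatFunc.X : RatFunc ℚ) ^ (m j) - RatFunc.X ^ t * RatFunc.X ^ (m i) ≠ 0) ∧
      (∀ t < a j, (RatFunc.X : RatFunc ℚ) ^ (m i) - RatFunc.X ^ (t + 1) * RatFunc.X ^ (m j) ≠ 0) := by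
    intro i j hij
    have hmem : (i, j) ∈ Finset.univ.filter (fun p : Fin n × Fin n => p.1 < p.2) :=
      Finset.mem_filter.mpr ⟨Finset.mem_univ _, hij⟩
    have h1 := h0 (i, j) hmem
    rw [map_mul] at h1
    obtain ⟨hA, hB⟩ := mul_ne_zero_iff.mp h1
    rw [map_prod] at hA hB
    have hA' := Finset.prod_ne_zero_iff.mp hA
    have hB' := Finset.prod_ne_zero_iff.mp hB
    constructor
    · intro t ht
      have := hA' t (Finset.mem_range.mpr ht)
      simpa [map_sub, map_mul, eval_C, eval_X, hm2] using this
    · intro t ht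
      have := hB' t (Finset.mem_range.mpr ht)
      simpa [map_sub, map_mul, eval_C, eval_X, hm2] using this
  have h1 : ∀ i j : Fin n, i < j → ∀ t < a i, m j ≠ m i + t := by
    intro i j hij t ht heq
    apply (hpair i j hij).1 t ht
    rw [heq, pow_add]; ring
  have h2 : ∀ i j : Fin n, i < j → ∀ t < a j, m i ≠ m j + t + 1 := by
    intro i j hij t ht heq
    apply (hpair i j hij).2 t ht
    rw [heq, pow_add, pow_add]; ring
  have hkey : ∀ i j : Fin n, i < j → (m i + a i ≤ m j ∨ m j + a j + 1 ≤ m i) := by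
    intro i j hij
    by_contra h
    push_neg at h
    obtain ⟨ha1, ha2⟩ := h
    rcases le_or_gt (m i) (m j) with h3 | h3
    · exact h1 i j hij (m j - m i) (by omega) (by omega)
    · exact h2 i j hij (m i - m j - 1) (by omega) (by omega)
  have hdisj : ∀ i j : Fin n, i ≠ j →
      Disjoint (Finset.Ico (m i) (m i + a i)) (Finset.Ico (m j) (m j + a j)) := by
    intro i j hij
    rw [Finset.disjoint_left]
    intro x hx hx'
    rw [Finset.mem_Ico] at hx hx'
    rcases lt_trichotomy i j with h | h | h
    · rcases hkey i j h with hk | hk <;> omega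
    · exact hij h
    · rcases hkey j i h with hk | hk <;> omega
  have hU : Finset.univ.biUnion (fun i : Fin n => Finset.Ico (m i) (m i + a i))
      = Finset.Ico 0 σ := by
    apply Finset.eq_of_subset_of_card_le
    · intro x hx
      rw [Finset.mem_biUnion] at hx
      obtain ⟨k, _, hk⟩ := hx
      rw [Finset.mem_Ico] at hk ⊢
      have := hmσ k; omega
    · rw [Finset.card_biUnion (fun i _ j _ h => hdisj i j h)]
      simp [Nat.card_Ico, hσdef]
  -- no bad pairs
  have hnobad : ∀ i j : Fin n, i < j → m i + a i ≤ m j := by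
    by_contra hbad
    push_neg at hbad
    set T : Finset (Fin n) :=
      Finset.univ.filter (fun j => ∃ i, i < j ∧ m j + a j + 1 ≤ m i) with hT
    have hTne : T.Nonempty := by
      obtain ⟨i, j, hij, hlt⟩ := hbad
      refine ⟨j, Finset.mem_filter.mpr ⟨Finset.mem_univ _, i, hij, ?_⟩⟩
      rcases hkey i j hij with hk | hk <;> omega
    obtain ⟨j₀, hj₀T, hmax⟩ := Finset.exists_max_image T m hTne
    obtain ⟨-, i₀, hi₀j₀, hbad₀⟩ := Finset.mem_filter.mp hj₀T
    have hgap : m j₀ + a j₀ ∈ Finset.Ico 0 σ := by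
      rw [Finset.mem_Ico]
      have := hmσ i₀; have := ha i₀; omega
    rw [← hU, Finset.mem_biUnion] at hgap
    obtain ⟨k, -, hk⟩ := hgap
    rw [Finset.mem_Ico] at hk
    have hkj : j₀ < k := by
      rcases lt_trichotomy k j₀ with h | h | h
      · rcases hkey k j₀ h with hk' | hk' <;> omega
      · subst h; omega
      · exact h
    have hmk : m k = m j₀ + a j₀ := by
      rcases hkey j₀ k hkj with hk' | hk' <;> [omega; (have := ha k; omega)]
    have hik : i₀ < k := lt_trans hi₀j₀ hkj
    have hbadik : m k + a k + 1 ≤ m i₀ := by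
      rcases hkey i₀ k hik with hk' | hk'
      · have := ha i₀; omega
      · exact hk'
    have hkT : k ∈ T := Finset.mem_filter.mpr ⟨Finset.mem_univ _, i₀, hik, hbadik⟩
    have := hmax k hkT
    have := ha j₀
    omega
  -- lower bound
  have hlow : ∀ i : Fin n, ∑ j ∈ Finset.Iio i, a j ≤ m i := by
    intro i
    have hsub : (Finset.Iio i).biUnion (fun j => Finset.Ico (m j) (m j + a j))
        ⊆ Finset.Ico 0 (m i) := by
      intro x hx
      rw [Finset.mem_biUnion] at hx
      obtain ⟨k, hkI, hk⟩ := hx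
      rw [Finset.mem_Iio] at hkI
      rw [Finset.mem_Ico] at hk ⊢
      have := hnobad k i hkI; omega
    have := Finset.card_le_card hsub
    rw [Finset.card_biUnion (fun p _ q _ h => hdisj p q h)] at this
    simpa using this
  -- upper bound
  have hhigh : ∀ i : Fin n, m i + ∑ j ∈ Finset.Ici i, a j ≤ σ := by
    intro i
    have hsub : (Finset.Ici i).biUnion (fun j => Finset.Ico (m j) (m j + a j))
        ⊆ Finset.Ico (m i) σ := by
      intro x hx
      rw [Finset.mem_biUnion] at hx
      obtain ⟨k, hkI, hk⟩ := hx
      rw [Finset.mem_Ici] at hkI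
      rw [Finset.mem_Ico] at hk ⊢
      rcases eq_or_lt_of_le hkI with h | h
      · subst h; have := hmσ i; omega
      · have := hnobad i k h; have := hmσ k; omega
    have hcard := Finset.card_le_card hsub
    rw [Finset.card_biUnion (fun p _ q _ h => hdisj p q h)] at hcard
    simp only [Nat.card_Ico, Nat.add_sub_cancel_left] at hcard
    have := hm1 i; have := haσ i
    omega
  have hsplit : ∀ i : Fin n, (∑ j ∈ Finset.Iio i, a j) + ∑ j ∈ Finset.Ici i, a j = σ := by
    intro i
    rw [← Finset.sum_union]
    · congr 1
      ext x
      simp [lt_or_ge]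
    · rw [Finset.disjoint_left]
      intro x hx hx'
      rw [Finset.mem_Iio] at hx
      rw [Finset.mem_Ici] at hx'
      exact absurd hx' (not_le.mpr hx)
  intro i
  have : m i = ∑ j ∈ Finset.Iio i, a j := by
    have := hlow i; have := hhigh i; have := hsplit i; omega
  rw [hm2 i, this]
end

section
/- For nonnegative integers a₁,…,aₙ with partial sums σᵢ = a₁+⋯+a_{i−1} (σ₁ = 0), the identity ∑_{i=1}^n (n−i)·(aᵢσᵢ + C(aᵢ,2)) = ∑_{i=1}^n C(σᵢ,2) holds, where C(m,2) = m(m−1)/2. -/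
open Finset

private lemma choose2_add (x y : ℕ) :
    (x + y).choose 2 = x.choose 2 + y.choose 2 + x * y := by
  induction y with
  | zero => simp
  | succ y ih =>
    have h1 : (x + y + 1).choose 2 = (x + y).choose 2 + (x + y) := by
      rw [Nat.choose_succ_succ]
      simp [Nat.choose_one_right]; ring
    have h2 : (y + 1).choose 2 = y.choose 2 + y := by
      rw [Nat.choose_succ_succ]
      simp [Nat.choose_one_right]; ring
    have : x + (y + 1) = (x + y) + 1 := by ring
    rw [this, h1, ih, h2]
    ring

private lemma sigma_choose (A : ℕ → ℕ) (n : ℕ) :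
    ∑ i ∈ Finset.range n, (A i * (∑ j ∈ Finset.range i, A j) + (A i).choose 2) =
      (∑ j ∈ Finset.range n, A j).choose 2 := by
  induction n with
  | zero => simp
  | succ n ih =>
    rw [Finset.sum_range_succ, ih, Finset.sum_range_succ,
      choose2_add (∑ j ∈ Finset.range n, A j) (A n)]
    ring

private lemma range_version (A : ℕ → ℕ) (n : ℕ) :
    ∑ i ∈ Finset.range n,
        (n - 1 - i) * (A i * (∑ j ∈ Finset.range i, A j) + (A i).choose 2) =
      ∑ i ∈ Finset.range n, (∑ j ∈ Finset.range i, A j).choose 2 := by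
  induction n with
  | zero => simp
  | succ n ih =>
    rw [Finset.sum_range_succ, Finset.sum_range_succ (f := fun i =>
      (∑ j ∈ Finset.range i, A j).choose 2)]
    have hw : ∀ i, i ∈ Finset.range n → (n + 1 - 1 - i) *
        (A i * (∑ j ∈ Finset.range i, A j) + (A i).choose 2) =
        (n - 1 - i) * (A i * (∑ j ∈ Finset.range i, A j) + (A i).choose 2)
        + (A i * (∑ j ∈ Finset.range i, A j) + (A i).choose 2) := by
      intro i hi
      rw [Finset.mem_range] at hi
      have : n + 1 - 1 - i = (n - 1 - i) + 1 := by omega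
      rw [this]; ring
    rw [Finset.sum_congr rfl hw, Finset.sum_add_distrib, ih, sigma_choose]
    simp

/-- Claim 2 of Károlyi–Nagy:
`∑ᵢ (n - i)·(aᵢ σᵢ + C(aᵢ, 2)) = ∑ᵢ C(σᵢ, 2)` where `σᵢ = a₁ + ⋯ + a_{i-1}`
(zero-based indexing: the weight `n - i` for `i = 1, …, n` becomes `n - 1 - i`). -/
theorem q_dyson_claim2
    (n : ℕ) (a : Fin n → ℕ) :
    ∑ i : Fin n, (n - 1 - (i : ℕ)) * (a i * (∑ j ∈ Finset.Iio i, a j) + (a i).choose 2) =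
      ∑ i : Fin n, (∑ j ∈ Finset.Iio i, a j).choose 2 := by
  set A : ℕ → ℕ := fun j => if h : j < n then a ⟨j, h⟩ else 0 with hAdef
  have hA : ∀ j : Fin n, A j = a j := by
    intro j; simp [hAdef, j.isLt]
  have key : ∀ i : Fin n, ∑ j ∈ Finset.Iio i, a j = ∑ j ∈ Finset.range (i : ℕ), A j := by
    intro i
    refine Finset.sum_bij (fun j _ => (j : ℕ)) ?_ ?_ ?_ ?_
    · intro j hj
      rw [Finset.mem_Iio, Fin.lt_def] at hj
      exact Finset.mem_range.2 hj
    · intro j _ k _ h; exact Fin.val_injective h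
    · intro k hk
      rw [Finset.mem_range] at hk
      exact ⟨⟨k, hk.trans i.isLt⟩, Finset.mem_Iio.2 (by exact hk), rfl⟩
    · intro j _; exact (hA j).symm
  calc ∑ i : Fin n, (n - 1 - (i : ℕ)) *
        (a i * (∑ j ∈ Finset.Iio i, a j) + (a i).choose 2)
      = ∑ i ∈ Finset.range n,
        (n - 1 - i) * (A i * (∑ j ∈ Finset.range i, A j) + (A i).choose 2) := by
        rw [← Fin.sum_univ_eq_sum_range]
        refine Finset.sum_congr rfl fun i _ => ?_
        rw [key i, hA i]
    _ = ∑ i ∈ Finset.range n, (∑ j ∈ Finset.range i, A j).choose 2 :=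
        range_version A n
    _ = ∑ i : Fin n, (∑ j ∈ Finset.Iio i, a j).choose 2 := by
        rw [← Fin.sum_univ_eq_sum_range]
        exact Finset.sum_congr rfl fun i _ => by rw [key i]
end

section
/- Let q be an indeterminate, a₁,…,aₙ positive integers, σ = ∑aᵢ, σᵢ = ∑_{j<i}a_j, and φᵢ(z) = (z−1)(z−q)⋯(z−q^{σ−aᵢ}). Then φᵢ'(q^{σᵢ}) = (−1)^{σᵢ} q^{τᵢ} (q)_{σᵢ} (q)_{σ−σ_{i+1}}, where τᵢ = C(σᵢ,2) + σᵢ(σ−σ_{i+1}) and (q)_k = (1−q)(1−q²)⋯(1−q^k). -/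
open Finset Polynomial

/-- `(q)_k = (1-q)(1-q²)⋯(1-qᵏ)` in `ℚ(q)`. -/
noncomputable def qPoch (k : ℕ) : RatFunc ℚ :=
  ∏ t ∈ Finset.range k, (1 - (RatFunc.X : RatFunc ℚ) ^ (t + 1))

lemma derivative_finset_prod' {R : Type*} [CommRing R] {ι : Type*} [DecidableEq ι]
    (s : Finset ι) (f : ι → Polynomial R) :
    Polynomial.derivative (∏ i ∈ s, f i) =
      ∑ i ∈ s, (∏ j ∈ s.erase i, f j) * Polynomial.derivative (f i) := by
  induction s using Finset.induction with
  | empty => simp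
  | @insert x t hx ih =>
    rw [Finset.prod_insert hx, Polynomial.derivative_mul, ih, Finset.sum_insert hx,
      Finset.erase_insert hx, Finset.mul_sum, mul_comm (Polynomial.derivative (f x))]
    congr 1
    apply Finset.sum_congr rfl
    intro j hj
    rw [Finset.erase_insert_of_ne (by rintro rfl; exact hx hj), Finset.prod_insert
      (fun h => hx (Finset.mem_of_mem_erase h)), mul_assoc]

lemma deriv_eval_prod' {F : Type*} [Field F] (r : ℕ → F) (N s : ℕ) (hs : s ∈ Finset.range N) :
    Polynomial.eval (r s) (Polynomial.derivative
      (∏ t ∈ Finset.range N, (Polynomial.X - Polynomial.C (r t)))) =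
    ∏ t ∈ (Finset.range N).erase s, (r s - r t) := by
  rw [derivative_finset_prod']
  simp only [Polynomial.derivative_sub, Polynomial.derivative_X, Polynomial.derivative_C,
    sub_zero, mul_one]
  rw [Polynomial.eval_finset_sum, Finset.sum_eq_single s]
  · simp [Polynomial.eval_prod]
  · intro b hb hbs
    rw [Polynomial.eval_prod]
    apply Finset.prod_eq_zero (Finset.mem_erase.mpr ⟨(Ne.symm hbs), hs⟩)
    simp
  · intro h; exact absurd hs h

lemma prod_lower' (s : ℕ) :
    ∏ t ∈ Finset.range s, ((RatFunc.X : RatFunc ℚ) ^ s - (RatFunc.X : RatFunc ℚ) ^ t) =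
      (-1) ^ s * (RatFunc.X : RatFunc ℚ) ^ s.choose 2 * qPoch s := by
  set q : RatFunc ℚ := RatFunc.X with hq
  have key : ∀ t ∈ Finset.range s, q ^ s - q ^ t = (-1) * q ^ t * (1 - q ^ (s - t)) := by
    intro t ht
    have h1 : q ^ s = q ^ t * q ^ (s - t) := by
      rw [← pow_add]; congr 1; have := Finset.mem_range.mp ht; omega
    ring_nf
    rw [h1]; ring
  rw [Finset.prod_congr rfl key, Finset.prod_mul_distrib, Finset.prod_mul_distrib,
    Finset.prod_const, Finset.prod_pow_eq_pow_sum, Finset.sum_range_id,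
    ← Nat.choose_two_right, Finset.card_range]
  congr 1
  rw [show qPoch s = ∏ t ∈ Finset.range s, (1 - q ^ (t + 1)) from rfl,
    ← Finset.prod_range_reflect]
  apply Finset.prod_congr rfl
  intro t ht
  congr 2
  have := Finset.mem_range.mp ht
  omega

lemma prod_upper' (s m : ℕ) (hsm : s ≤ m) :
    ∏ t ∈ Finset.Ico (s+1) (m+1), ((RatFunc.X : RatFunc ℚ) ^ s - (RatFunc.X : RatFunc ℚ) ^ t) =
      (RatFunc.X : RatFunc ℚ) ^ (s * (m - s)) * qPoch (m - s) := by
  set q : RatFunc ℚ := RatFunc.X with hq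
  rw [Finset.prod_Ico_eq_prod_range]
  have hcard : m + 1 - (s + 1) = m - s := by omega
  rw [hcard]
  have key : ∀ t ∈ Finset.range (m - s), q ^ s - q ^ (s + 1 + t) = q ^ s * (1 - q ^ (t + 1)) := by
    intro t ht
    have h1 : q ^ (s + 1 + t) = q ^ s * q ^ (t + 1) := by
      rw [← pow_add]; congr 1; omega
    rw [h1]; ring
  rw [Finset.prod_congr rfl key, Finset.prod_mul_distrib, Finset.prod_const, ← pow_mul,
    Finset.card_range, show qPoch (m - s) = ∏ t ∈ Finset.range (m - s), (1 - q ^ (t + 1)) from rfl]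

lemma erase_split' (s m : ℕ) (hsm : s ≤ m) :
    (Finset.range (m+1)).erase s = Finset.range s ∪ Finset.Ico (s+1) (m+1) := by
  ext t
  simp only [Finset.mem_erase, Finset.mem_range, Finset.mem_union, Finset.mem_Ico]
  omega

/-- Evaluation of the derivative of the grid polynomial
`φᵢ(z) = (z-1)(z-q)⋯(z-q^{σ-aᵢ})` at `q^{σᵢ}`:
`φᵢ'(q^{σᵢ}) = (-1)^{σᵢ} q^{τᵢ} (q)_{σᵢ} (q)_{σ-σ_{i+1}}` with
`τᵢ = C(σᵢ,2) + σᵢ(σ-σ_{i+1})`, where `σᵢ = ∑_{j<i} a_j`, `σ = ∑ a_j`. -/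
theorem q_dyson_derivative_eval
    (n : ℕ) (a : Fin n → ℕ) (ha : ∀ i, 0 < a i) (i : Fin n) :
    Polynomial.eval ((RatFunc.X : RatFunc ℚ) ^ (∑ j ∈ Finset.Iio i, a j))
        (Polynomial.derivative
          (∏ t ∈ Finset.range ((∑ j, a j) - a i + 1),
            (Polynomial.X - Polynomial.C ((RatFunc.X : RatFunc ℚ) ^ t)))) =
      (-1) ^ (∑ j ∈ Finset.Iio i, a j) *
        (RatFunc.X : RatFunc ℚ) ^
          ((∑ j ∈ Finset.Iio i, a j).choose 2 +
            (∑ j ∈ Finset.Iio i, a j) * ((∑ j, a j) - (∑ j ∈ Finset.Iic i, a j))) *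
        qPoch (∑ j ∈ Finset.Iio i, a j) *
        qPoch ((∑ j, a j) - (∑ j ∈ Finset.Iic i, a j)) := by
  set s := ∑ j ∈ Finset.Iio i, a j with hs
  set σ := ∑ j, a j with hσ
  set m := σ - a i with hm
  have hIic : ∑ j ∈ Finset.Iic i, a j = s + a i := by
    rw [hs, ← Finset.Iio_insert, Finset.sum_insert Finset.notMem_Iio_self, add_comm]
  have hIicσ : ∑ j ∈ Finset.Iic i, a j ≤ σ :=
    Finset.sum_le_sum_of_subset (Finset.subset_univ _)
  have hsm : s ≤ m := by omega
  have hdiff : σ - ∑ j ∈ Finset.Iic i, a j = m - s := by omega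
  rw [hdiff]
  rw [deriv_eval_prod' (fun t => (RatFunc.X : RatFunc ℚ) ^ t) (m + 1) s
    (Finset.mem_range.mpr (by omega))]
  rw [erase_split' s m hsm, Finset.prod_union (by
    rw [Finset.disjoint_left]
    intro t ht ht'
    simp only [Finset.mem_range] at ht
    simp only [Finset.mem_Ico] at ht'
    omega)]
  rw [prod_lower' s, prod_upper' s m hsm, pow_add]
  ring
end

section
/- Let q be an indeterminate, a₁,…,aₙ positive integers, σᵢ = ∑_{j<i}a_j, σ = σ_{n+1}. Define F(x₁,…,xₙ) = ∏_{1≤i<j≤n}[∏_{t=0}^{aᵢ−1}(x_j − xᵢq^t)·∏_{t=1}^{a_j}(xᵢ − x_jq^t)]. Then F(q^{σ₁},…,q^{σₙ}) = (−1)^u q^v ∏_{i=1}^n (q)_{σᵢ}(q)_{σ−σᵢ}/(q)_{aᵢ}, where u = ∑_i (n−i)aᵢ and v = ∑_i [(n−i)aᵢσᵢ + (n−i)C(aᵢ,2) + σᵢ(σ−σ_{i+1})]. -/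
open Finset MvPolynomial

namespace QDysonAux

lemma one_sub_X_pow_ne_zero (t : ℕ) : (1 : RatFunc ℚ) - RatFunc.X ^ (t + 1) ≠ 0 := by
  intro h
  rw [sub_eq_zero] at h
  have h1 : (algebraMap (Polynomial ℚ) (RatFunc ℚ)) 1
      = (algebraMap (Polynomial ℚ) (RatFunc ℚ)) (Polynomial.X ^ (t + 1)) := by
    simpa [map_pow, RatFunc.algebraMap_X] using h
  have h2 := RatFunc.algebraMap_injective ℚ h1
  have h3 := congrArg Polynomial.natDegree h2
  simp [Polynomial.natDegree_X_pow] at h3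

lemma qPoch_zero : qPoch 0 = 1 := by simp [qPoch]

lemma qPoch_succ (k : ℕ) :
    qPoch (k + 1) = qPoch k * (1 - (RatFunc.X : RatFunc ℚ) ^ (k + 1)) := by
  simp [qPoch, prod_range_succ]

lemma qPoch_ne_zero (k : ℕ) : qPoch k ≠ 0 := by
  refine prod_ne_zero_iff.mpr fun t _ => one_sub_X_pow_ne_zero t

lemma gauss_sum (n : ℕ) : ∑ i ∈ range n, i = n.choose 2 := by
  have h := Finset.sum_range_id_mul_two n
  rw [Nat.choose_two_right]
  omega

lemma qPoch_desc : ∀ (c : ℕ) {m : ℕ}, c ≤ m →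
    qPoch (m - c) * ∏ t ∈ range c, (1 - (RatFunc.X : RatFunc ℚ) ^ (m - t)) = qPoch m := by
  intro c
  induction c with
  | zero => intro m _; simp
  | succ c ih =>
    intro m h
    rw [prod_range_succ]
    have h1 : m - c = (m - (c + 1)) + 1 := by omega
    have key : qPoch (m - (c + 1)) * (1 - (RatFunc.X : RatFunc ℚ) ^ (m - c)) = qPoch (m - c) := by
      rw [h1, ← qPoch_succ]
    calc qPoch (m - (c + 1)) *
          ((∏ t ∈ range c, (1 - (RatFunc.X : RatFunc ℚ) ^ (m - t))) *
            (1 - (RatFunc.X : RatFunc ℚ) ^ (m - c)))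
        = (qPoch (m - (c + 1)) * (1 - (RatFunc.X : RatFunc ℚ) ^ (m - c))) *
            ∏ t ∈ range c, (1 - (RatFunc.X : RatFunc ℚ) ^ (m - t)) := by ring
      _ = qPoch (m - c) * ∏ t ∈ range c, (1 - (RatFunc.X : RatFunc ℚ) ^ (m - t)) := by rw [key]
      _ = qPoch m := ih (by omega)

lemma qPoch_asc (b m : ℕ) :
    qPoch m * ∏ t ∈ range b, (1 - (RatFunc.X : RatFunc ℚ) ^ (m + t + 1)) = qPoch (m + b) := by
  induction b with
  | zero => simp
  | succ b ih =>
    rw [prod_range_succ, ← mul_assoc, ih, ← qPoch_succ]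
    rfl

lemma pair_eval (s c d b : ℕ) (h : s + c ≤ d) :
    (∏ t ∈ range c, ((RatFunc.X : RatFunc ℚ) ^ d - RatFunc.X ^ t * RatFunc.X ^ s)) *
      (∏ t ∈ range b, ((RatFunc.X : RatFunc ℚ) ^ s - RatFunc.X ^ (t + 1) * RatFunc.X ^ d)) =
    (-1) ^ c * (RatFunc.X : RatFunc ℚ) ^ (c * s + c.choose 2 + b * s) *
      (qPoch (d + b - s) / qPoch (d - (s + c))) := by
  have hA : (∏ t ∈ range c, ((RatFunc.X : RatFunc ℚ) ^ d - RatFunc.X ^ t * RatFunc.X ^ s)) =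
      (-1) ^ c * (RatFunc.X : RatFunc ℚ) ^ (c.choose 2 + c * s) *
        ∏ t ∈ range c, (1 - (RatFunc.X : RatFunc ℚ) ^ (d - s - t)) := by
    have hterm : ∀ t ∈ range c, ((RatFunc.X : RatFunc ℚ) ^ d - RatFunc.X ^ t * RatFunc.X ^ s) =
        (-1) * (RatFunc.X : RatFunc ℚ) ^ (t + s) * (1 - RatFunc.X ^ (d - s - t)) := by
      intro t ht
      simp only [mem_range] at ht
      have h3 : (RatFunc.X : RatFunc ℚ) ^ t * RatFunc.X ^ s = RatFunc.X ^ (t + s) :=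
        (pow_add _ _ _).symm
      have h4 : (RatFunc.X : RatFunc ℚ) ^ (t + s) * RatFunc.X ^ (d - s - t) = RatFunc.X ^ d := by
        rw [← pow_add]
        congr 1
        omega
      rw [h3, show ((-1) * (RatFunc.X : RatFunc ℚ) ^ (t + s) * (1 - RatFunc.X ^ (d - s - t)))
        = (RatFunc.X : RatFunc ℚ) ^ (t + s) * RatFunc.X ^ (d - s - t) - RatFunc.X ^ (t + s) from by
        ring, h4]
    rw [prod_congr rfl hterm, prod_mul_distrib, prod_mul_distrib, prod_const,
      prod_pow_eq_pow_sum, sum_add_distrib, gauss_sum, sum_const, card_range, smul_eq_mul]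
  have hA2 : (∏ t ∈ range c, (1 - (RatFunc.X : RatFunc ℚ) ^ (d - s - t))) =
      qPoch (d - s) / qPoch (d - s - c) := by
    rw [eq_div_iff (qPoch_ne_zero _), mul_comm]
    exact qPoch_desc c (by omega)
  have hB : (∏ t ∈ range b, ((RatFunc.X : RatFunc ℚ) ^ s - RatFunc.X ^ (t + 1) * RatFunc.X ^ d)) =
      (RatFunc.X : RatFunc ℚ) ^ (b * s) * (qPoch (d - s + b) / qPoch (d - s)) := by
    have hterm : ∀ t ∈ range b, ((RatFunc.X : RatFunc ℚ) ^ s - RatFunc.X ^ (t + 1) * RatFunc.X ^ d)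
        = (RatFunc.X : RatFunc ℚ) ^ s * (1 - RatFunc.X ^ (d - s + t + 1)) := by
      intro t ht
      have h5 : (RatFunc.X : RatFunc ℚ) ^ s * RatFunc.X ^ (d - s + t + 1)
          = RatFunc.X ^ (t + 1) * RatFunc.X ^ d := by
        rw [← pow_add, ← pow_add]
        congr 1
        omega
      rw [mul_sub, mul_one, h5]
    rw [prod_congr rfl hterm, prod_mul_distrib, prod_const, card_range, ← pow_mul,
      show s * b = b * s from Nat.mul_comm s b]
    congr 1
    rw [eq_div_iff (qPoch_ne_zero _), mul_comm]
    exact qPoch_asc b (d - s)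
  rw [hA, hA2, hB,
    show d + b - s = d - s + b from by omega,
    show d - (s + c) = d - s - c from by omega,
    show c * s + c.choose 2 + b * s = (c.choose 2 + c * s) + b * s from by omega, pow_add]
  have h6 := qPoch_ne_zero (d - s)
  have h7 := qPoch_ne_zero (d - s - c)
  field_simp
  ring

/-- `σ i` -/
def Sg (a : ℕ → ℕ) (i : ℕ) : ℕ := ∑ j ∈ range i, a j

lemma Sg_succ (a : ℕ → ℕ) (i : ℕ) : Sg a (i + 1) = Sg a i + a i := sum_range_succ a i

lemma Sg_zero (a : ℕ → ℕ) : Sg a 0 = 0 := rfl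

lemma Sg_mono (a : ℕ → ℕ) {i j : ℕ} (h : i ≤ j) : Sg a i ≤ Sg a j :=
  sum_le_sum_of_subset (range_subset_range.mpr h)

lemma main (a : ℕ → ℕ) : ∀ N : ℕ,
    (∏ j ∈ range N, ∏ i ∈ range j,
      ((∏ t ∈ range (a i),
          ((RatFunc.X : RatFunc ℚ) ^ (Sg a j) - RatFunc.X ^ t * RatFunc.X ^ (Sg a i))) *
       (∏ t ∈ range (a j),
          ((RatFunc.X : RatFunc ℚ) ^ (Sg a i) - RatFunc.X ^ (t + 1) * RatFunc.X ^ (Sg a j))))) =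
    (-1) ^ (∑ i ∈ range N, (N - 1 - i) * a i) *
      (RatFunc.X : RatFunc ℚ) ^
        (∑ i ∈ range N, ((N - 1 - i) * (a i * Sg a i) + (N - 1 - i) * (a i).choose 2 +
          Sg a i * (Sg a N - Sg a (i + 1)))) *
      ∏ i ∈ range N, (qPoch (Sg a i) * qPoch (Sg a N - Sg a i) / qPoch (a i)) := by
  intro N
  induction N with
  | zero => simp
  | succ N ih =>
    rw [prod_range_succ, ih]
    -- evaluate the new column of pairs
    have hpair : ∀ i ∈ range N,
        ((∏ t ∈ range (a i),
            ((RatFunc.X : RatFunc ℚ) ^ (Sg a N) - RatFunc.X ^ t * RatFunc.X ^ (Sg a i))) *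
         (∏ t ∈ range (a N),
            ((RatFunc.X : RatFunc ℚ) ^ (Sg a i) - RatFunc.X ^ (t + 1) * RatFunc.X ^ (Sg a N)))) =
        (-1) ^ (a i) *
          (RatFunc.X : RatFunc ℚ) ^ (a i * Sg a i + (a i).choose 2 + a N * Sg a i) *
          (qPoch (Sg a N + a N - Sg a i) / qPoch (Sg a N - Sg a (i + 1))) := by
      intro i hi
      simp only [mem_range] at hi
      have hle : Sg a i + a i ≤ Sg a N := by
        rw [← Sg_succ]
        exact Sg_mono a hi
      have hpe := pair_eval (Sg a i) (a i) (Sg a N) (a N) hle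
      rwa [show Sg a i + a i = Sg a (i + 1) from (Sg_succ a i).symm] at hpe
    rw [prod_congr rfl hpair, prod_mul_distrib, prod_mul_distrib,
      prod_pow_eq_pow_sum, prod_pow_eq_pow_sum, prod_div_distrib]
    -- arithmetic on exponents
    have hU : (∑ i ∈ range (N + 1), (N + 1 - 1 - i) * a i)
        = (∑ i ∈ range N, (N - 1 - i) * a i) + ∑ i ∈ range N, a i := by
      rw [sum_range_succ]
      have : ∀ i ∈ range N, (N + 1 - 1 - i) * a i = (N - 1 - i) * a i + a i := by
        intro i hi
        simp only [mem_range] at hi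
        have : N + 1 - 1 - i = (N - 1 - i) + 1 := by omega
        rw [this]
        ring
      rw [sum_congr rfl this, sum_add_distrib]
      simp
    have hV : (∑ i ∈ range (N + 1),
          ((N + 1 - 1 - i) * (a i * Sg a i) + (N + 1 - 1 - i) * (a i).choose 2 +
            Sg a i * (Sg a (N + 1) - Sg a (i + 1))))
        = (∑ i ∈ range N, ((N - 1 - i) * (a i * Sg a i) + (N - 1 - i) * (a i).choose 2 +
            Sg a i * (Sg a N - Sg a (i + 1)))) +
          ∑ i ∈ range N, (a i * Sg a i + (a i).choose 2 + a N * Sg a i) := by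
      rw [sum_range_succ]
      have hlast : (N + 1 - 1 - N) * (a N * Sg a N) + (N + 1 - 1 - N) * (a N).choose 2 +
          Sg a N * (Sg a (N + 1) - Sg a (N + 1)) = 0 := by
        simp [Nat.sub_self]
      rw [hlast, add_zero]
      have : ∀ i ∈ range N,
          ((N + 1 - 1 - i) * (a i * Sg a i) + (N + 1 - 1 - i) * (a i).choose 2 +
            Sg a i * (Sg a (N + 1) - Sg a (i + 1)))
          = ((N - 1 - i) * (a i * Sg a i) + (N - 1 - i) * (a i).choose 2 +
              Sg a i * (Sg a N - Sg a (i + 1))) +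
            (a i * Sg a i + (a i).choose 2 + a N * Sg a i) := by
        intro i hi
        simp only [mem_range] at hi
        have h1 : Sg a (i + 1) ≤ Sg a N := Sg_mono a hi
        have h2 : Sg a (N + 1) - Sg a (i + 1) = (Sg a N - Sg a (i + 1)) + a N := by
          rw [Sg_succ]
          omega
        have h3 : N + 1 - 1 - i = (N - 1 - i) + 1 := by omega
        rw [h2, h3]
        ring
      rw [sum_congr rfl this, sum_add_distrib]
    rw [hU, hV, pow_add, pow_add]
    -- rewrite Sg a (N+1)
    rw [show Sg a (N + 1) = Sg a N + a N from Sg_succ a N]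
    rw [prod_range_succ, show Sg a N + a N - Sg a N = a N from by omega]
    -- telescoping
    have E1 : (∏ i ∈ range N, qPoch (Sg a N - Sg a i))
        = qPoch (Sg a N) * ∏ i ∈ range N, qPoch (Sg a N - Sg a (i + 1)) := by
      have h0 := prod_range_succ' (fun i => qPoch (Sg a N - Sg a i)) N
      rw [prod_range_succ] at h0
      simp only [Nat.sub_self, qPoch_zero, mul_one, Sg_zero, Nat.sub_zero] at h0
      rw [h0, mul_comm]
    rw [prod_div_distrib, prod_mul_distrib, prod_div_distrib, prod_mul_distrib, E1]
    have n1 : (∏ i ∈ range N, qPoch (Sg a i)) ≠ 0 :=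
      prod_ne_zero_iff.mpr fun i _ => qPoch_ne_zero _
    have n2 : (∏ i ∈ range N, qPoch (Sg a N - Sg a (i + 1))) ≠ 0 :=
      prod_ne_zero_iff.mpr fun i _ => qPoch_ne_zero _
    have n3 : (∏ i ∈ range N, qPoch (a i)) ≠ 0 :=
      prod_ne_zero_iff.mpr fun i _ => qPoch_ne_zero _
    have n4 := qPoch_ne_zero (a N)
    have n5 := qPoch_ne_zero (Sg a N)
    have hsig : (∑ i ∈ range N, a i) = Sg a N := rfl
    rw [hsig]
    field_simp


lemma pair_prod_to_range {M : Type*} [CommMonoid M] (n : ℕ) (G : ℕ → ℕ → M) :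
    (∏ p ∈ Finset.univ.filter (fun p : Fin n × Fin n => p.1 < p.2), G p.1.val p.2.val)
    = ∏ j ∈ range n, ∏ i ∈ range j, G i j := by
  rw [prod_filter, ← univ_product_univ, prod_product_right]
  have h1 : ∀ y : Fin n,
      (∏ x : Fin n, if (x, y).1 < (x, y).2 then G (x, y).1.val (x, y).2.val else 1)
      = ∏ x ∈ range n, if x < y.val then G x y.val else 1 := by
    intro y
    simp only [Fin.lt_iff_val_lt_val]
    exact Fin.prod_univ_eq_prod_range (fun x => if x < y.val then G x y.val else 1) n
  rw [prod_congr rfl (fun y _ => h1 y),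
    Fin.prod_univ_eq_prod_range (fun y => ∏ x ∈ range n, if x < y then G x y else 1) n]
  refine prod_congr rfl fun y hy => ?_
  simp only [mem_range] at hy
  rw [← prod_filter]
  refine prod_congr ?_ fun _ _ => rfl
  ext z
  simp only [mem_filter, mem_range]
  omega

lemma sum_Iio_fin {M : Type*} [AddCommMonoid M] {n : ℕ} (f : Fin n → M) (g : ℕ → M)
    (hg : ∀ j : Fin n, f j = g j.val) (i : Fin n) :
    ∑ j ∈ Finset.Iio i, f j = ∑ j ∈ range i.val, g j := by
  rw [← Fin.sum_univ_eq_sum_range]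
  exact Finset.sum_bij' (fun (j : Fin n) (hj : j ∈ Finset.Iio i) =>
      (⟨j.val, Fin.lt_iff_val_lt_val.mp (Finset.mem_Iio.mp hj)⟩ : Fin i.val))
    (fun (k : Fin i.val) _ => (⟨k.val, k.isLt.trans i.isLt⟩ : Fin n))
    (fun _ _ => mem_univ _)
    (fun k _ => Finset.mem_Iio.mpr (Fin.lt_iff_val_lt_val.mpr k.isLt))
    (fun j hj => Fin.ext rfl) (fun k hk => Fin.ext rfl) (fun j hj => hg j)

end QDysonAux

/-- Closed-form evaluation of the q-Dyson polynomial `F` at `(q^{σ₁}, …, q^{σₙ})`: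
`F(q^{σ₁},…,q^{σₙ}) = (-1)^u q^v ∏ᵢ (q)_{σᵢ}(q)_{σ-σᵢ}/(q)_{aᵢ}` with
`u = ∑ᵢ (n-i)aᵢ` and `v = ∑ᵢ [(n-i)aᵢσᵢ + (n-i)C(aᵢ,2) + σᵢ(σ-σ_{i+1})]`
(zero-based indexing: `n - i` becomes `n - 1 - i`). -/
theorem q_dyson_F_eval
    (n : ℕ) (a : Fin n → ℕ) (ha : ∀ i, 0 < a i) :
    MvPolynomial.eval (fun i => (RatFunc.X : RatFunc ℚ) ^ (∑ j ∈ Finset.Iio i, a j))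
        (∏ p ∈ Finset.univ.filter (fun p : Fin n × Fin n => p.1 < p.2),
          ((∏ t ∈ Finset.range (a p.1), (X p.2 - C ((RatFunc.X : RatFunc ℚ) ^ t) * X p.1)) *
           (∏ t ∈ Finset.range (a p.2), (X p.1 - C ((RatFunc.X : RatFunc ℚ) ^ (t + 1)) * X p.2)))) =
      (-1) ^ (∑ i : Fin n, (n - 1 - (i : ℕ)) * a i) *
        (RatFunc.X : RatFunc ℚ) ^
          (∑ i : Fin n,
            ((n - 1 - (i : ℕ)) * (a i * (∑ j ∈ Finset.Iio i, a j)) +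
              (n - 1 - (i : ℕ)) * (a i).choose 2 +
              (∑ j ∈ Finset.Iio i, a j) * ((∑ j, a j) - (∑ j ∈ Finset.Iic i, a j)))) *
        ∏ i : Fin n,
          (qPoch (∑ j ∈ Finset.Iio i, a j) * qPoch ((∑ j, a j) - (∑ j ∈ Finset.Iio i, a j)) /
            qPoch (a i)) := by
  classical
  open QDysonAux in
  set a' : ℕ → ℕ := fun k => if h : k < n then a ⟨k, h⟩ else 1 with ha'def
  have ha' : ∀ i : Fin n, a i = a' i.val := by
    intro i
    simp [ha'def, i.isLt]
  have hIio : ∀ i : Fin n, (∑ j ∈ Finset.Iio i, a j) = QDysonAux.Sg a' i.val := fun i =>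
    QDysonAux.sum_Iio_fin a a' ha' i
  have htot : (∑ j, a j) = QDysonAux.Sg a' n := by
    rw [show QDysonAux.Sg a' n = ∑ j : Fin n, a' j.val from
      (Fin.sum_univ_eq_sum_range a' n).symm]
    exact Finset.sum_congr rfl fun i _ => ha' i
  have hIic : ∀ i : Fin n, (∑ j ∈ Finset.Iic i, a j) = QDysonAux.Sg a' (i.val + 1) := by
    intro i
    rw [← Finset.Iio_insert, Finset.sum_insert (by simp), QDysonAux.Sg_succ, hIio i, ha' i]
    exact add_comm _ _
  simp only [map_prod, map_mul, map_sub, eval_X, eval_C]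
  simp only [hIio, htot, hIic]
  simp only [ha']
  rw [QDysonAux.pair_prod_to_range n (fun x y =>
    (∏ t ∈ range (a' x),
      ((RatFunc.X : RatFunc ℚ) ^ (QDysonAux.Sg a' y) -
        RatFunc.X ^ t * RatFunc.X ^ (QDysonAux.Sg a' x))) *
    (∏ t ∈ range (a' y),
      ((RatFunc.X : RatFunc ℚ) ^ (QDysonAux.Sg a' x) -
        RatFunc.X ^ (t + 1) * RatFunc.X ^ (QDysonAux.Sg a' y))))]
  rw [Fin.sum_univ_eq_sum_range (fun k => (n - 1 - k) * a' k) n,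
    Fin.sum_univ_eq_sum_range (fun k =>
      ((n - 1 - k) * (a' k * QDysonAux.Sg a' k) + (n - 1 - k) * (a' k).choose 2 +
        QDysonAux.Sg a' k * (QDysonAux.Sg a' n - QDysonAux.Sg a' (k + 1)))) n,
    Fin.prod_univ_eq_prod_range (fun k =>
      (qPoch (QDysonAux.Sg a' k) * qPoch (QDysonAux.Sg a' n - QDysonAux.Sg a' k) /
        qPoch (a' k))) n]
  exact QDysonAux.main a' n
end

section
/- Let a₁,…,aₙ be nonnegative integers. The constant term of ∏_{1≤i≠j≤n} (1 − xᵢ/x_j)^{aᵢ} equals the multinomial coefficient (a₁+a₂+⋯+aₙ)!/(a₁!a₂!⋯aₙ!). -/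
open Finset

/-- The ring of Laurent polynomials in `n` variables over `ℚ`. -/
noncomputable abbrev qLaurent (n : ℕ) : Type :=
  AddMonoidAlgebra ℚ (Fin n →₀ ℤ)

/-- The Laurent monomial `c · x₁^{m₁}⋯xₙ^{mₙ}`. -/
noncomputable def lmono {n : ℕ} (m : Fin n →₀ ℤ) (c : ℚ) : qLaurent n :=
  AddMonoidAlgebra.ofCoeff (Finsupp.single m c)

set_option maxHeartbeats 1000000
set_option synthInstance.maxHeartbeats 400000

namespace Dyson

variable {n : ℕ}

lemma supp_mul_lt (k : Fin n) {f g : qLaurent n} (hf : ∀ μ ∈ f.coeff.support, μ k ≤ 0)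
    (hg : ∀ μ ∈ g.coeff.support, μ k < 0) : ∀ μ ∈ (f * g).coeff.support, μ k < 0 := by
  intro μ hμ
  have := AddMonoidAlgebra.support_coeff_mul_subset f g hμ
  rw [Finset.mem_add] at this
  obtain ⟨α, hα, β, hβ, rfl⟩ := this
  have : (α + β) k = α k + β k := Finsupp.add_apply α β k
  rw [this]
  have := hf α hα
  have := hg β hβ
  omega

lemma supp_prod_one_add {ι : Type*} (k : Fin n) (T : Finset ι) (g : ι → qLaurent n)
    (h : ∀ i ∈ T, ∀ μ ∈ (g i).coeff.support, μ k < 0) :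
    ∀ μ ∈ ((∏ i ∈ T, (1 + g i)) - 1).coeff.support, μ k < 0 := by
  classical
  induction T using Finset.cons_induction with
  | empty => simp
  | cons i T hi ih =>
    intro μ hμ
    rw [Finset.prod_cons] at hμ
    set D := (∏ i ∈ T, (1 + g i)) - 1 with hD
    have hprod : (1 + g i) * (∏ i ∈ T, (1 + g i)) - 1 = g i + (D + g i * D) := by
      rw [hD]; ring
    rw [hprod] at hμ
    have hDs : ∀ μ ∈ D.coeff.support, μ k < 0 := ih (fun j hj => h j (Finset.mem_cons.mpr (Or.inr hj)))
    have hgi : ∀ μ ∈ (g i).coeff.support, μ k < 0 := h i (Finset.mem_cons_self i T)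
    have h2 : ∀ μ ∈ (D + g i * D).coeff.support, μ k < 0 := by
      intro μ hμ
      rcases Finset.mem_union.mp (Finsupp.support_add (g₁ := D.coeff) (g₂ := (g i * D).coeff) hμ) with h' | h'
      · exact hDs μ h'
      · exact supp_mul_lt k (fun ν hν => le_of_lt (hgi ν hν)) hDs μ h'
    rcases Finset.mem_union.mp (Finsupp.support_add (g₁ := (g i).coeff) (g₂ := (D + g i * D).coeff) hμ) with h' | h'
    · exact hgi μ h'
    · exact h2 μ h'

lemma supp_pow_one_add (k : Fin n) (h : qLaurent n) (a : ℕ)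
    (hh : ∀ μ ∈ h.coeff.support, μ k < 0) :
    ∀ μ ∈ ((1 + h) ^ a - 1).coeff.support, μ k < 0 := by
  have : (1 + h) ^ a = ∏ _i ∈ Finset.range a, (1 + h) := by
    rw [Finset.prod_const, Finset.card_range]
  rw [this]
  exact supp_prod_one_add k _ _ (fun i _ => hh)

noncomputable def zeroAt (k : Fin n) : Subalgebra ℚ (qLaurent n) where
  carrier := {f | ∀ μ ∈ f.coeff.support, μ k = 0}
  mul_mem' := by
    intro f g hf hg μ hμ
    have := AddMonoidAlgebra.support_coeff_mul_subset f g hμ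
    rw [Finset.mem_add] at this
    obtain ⟨α, hα, β, hβ, rfl⟩ := this
    rw [Finsupp.add_apply, hf α hα, hg β hβ]; ring
  add_mem' := by
    intro f g hf hg μ hμ
    rcases Finset.mem_union.mp (Finsupp.support_add (g₁ := f.coeff) (g₂ := g.coeff) hμ) with h' | h'
    · exact hf μ h'
    · exact hg μ h'
  algebraMap_mem' := by
    intro r μ hμ
    have : ((algebraMap ℚ (qLaurent n)) r).coeff = Finsupp.single 0 r := rfl
    rw [this] at hμ
    have := Finsupp.support_single_subset hμ
    simp only [Finset.mem_singleton] at this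
    rw [this]
    rfl


noncomputable def e (i : Fin n) : Fin n →₀ ℤ := Finsupp.single i 1
noncomputable def u (i j : Fin n) : qLaurent n := lmono (e i - e j) 1
noncomputable def XX (i : Fin n) : qLaurent n := lmono (e i) 1

lemma e_apply_self (i : Fin n) : e i i = 1 := Finsupp.single_eq_same
lemma e_apply_ne {i j : Fin n} (h : j ≠ i) : e i j = 0 := Finsupp.single_eq_of_ne' (Ne.symm h)

lemma e_ne (i j : Fin n) (h : i ≠ j) : e i ≠ e j := by
  intro hc
  have h1 : e i i = e j i := by rw [hc]
  rw [e_apply_self, e_apply_ne h] at h1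
  exact one_ne_zero h1

lemma lmono_mul (m m' : Fin n →₀ ℤ) : lmono m 1 * lmono m' 1 = lmono (m + m') (1:ℚ) := by
  simpa [lmono] using AddMonoidAlgebra.single_mul_single (m₁ := m) (m₂ := m') (r₁ := (1:ℚ)) (r₂ := 1)

lemma XX_ne_zero (i : Fin n) : XX i ≠ 0 := by
  simpa [XX, lmono] using Finsupp.single_ne_zero.mpr (one_ne_zero (α := ℚ))

lemma XX_sub_ne_zero {i j : Fin n} (h : i ≠ j) : XX i - XX j ≠ 0 := by
  intro hc
  have h1 : (XX i - XX j).coeff (e i) = 0 := by rw [hc]; rfl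
  rw [AddMonoidAlgebra.coeff_sub, Finsupp.sub_apply] at h1
  have h2 : (XX i).coeff (e i) = 1 := by simp [XX, lmono]
  have h3 : (XX j).coeff (e i) = 0 := by
    simp only [XX, lmono]
    exact Finsupp.single_eq_of_ne' (e_ne j i (Ne.symm h))
  rw [h2, h3] at h1; norm_num at h1

lemma one_sub_u_mul_XX {k j : Fin n} : (1 - u k j) * XX j = XX j - XX k := by
  rw [sub_mul, one_mul, u, XX, lmono_mul]
  congr 1
  rw [XX]; congr 1
  simp [sub_add_cancel]

lemma u_coeff_zero {k j : Fin n} (h : k ≠ j) : (u k j).coeff 0 = 0 := by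
  have hm : e k - e j ≠ (0 : Fin n →₀ ℤ) := by
    intro hc
    have : (e k - e j) k = 0 := by rw [hc]; rfl
    rw [Finsupp.sub_apply, e_apply_self, e_apply_ne h] at this
    norm_num at this
  simp only [u, lmono]
  exact Finsupp.single_eq_of_ne' hm

lemma one_coeff_zero : (1 : qLaurent n).coeff 0 = 1 := by
  rw [AddMonoidAlgebra.one_def]; simp

lemma one_sub_u_ne_zero {k j : Fin n} (h : k ≠ j) : (1 - u k j) ≠ 0 := by
  intro hc
  have h1 : ((1 : qLaurent n) - u k j).coeff 0 = 0 := by rw [hc]; rfl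
  rw [AddMonoidAlgebra.coeff_sub, Finsupp.sub_apply, one_coeff_zero, u_coeff_zero h] at h1
  norm_num at h1



noncomputable def Fdy (S : Finset (Fin n)) (a : Fin n → ℕ) : qLaurent n :=
  ∏ p ∈ (S ×ˢ S).filter (fun p : Fin n × Fin n => p.1 ≠ p.2), (1 - u p.1 p.2) ^ a p.1

-- recursion splitting: a k ≥ 1
lemma Fdy_split_rec (S : Finset (Fin n)) (a : Fin n → ℕ) (k : Fin n) (hk : k ∈ S) (hak : 1 ≤ a k) :
    Fdy S a = Fdy S (Function.update a k (a k - 1)) * ∏ j ∈ S.erase k, (1 - u k j) := by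
  classical
  set b := Function.update a k (a k - 1) with hb
  set P := (S ×ˢ S).filter (fun p : Fin n × Fin n => p.1 ≠ p.2) with hP
  have key : ∀ p ∈ P, (1 - u p.1 p.2) ^ a p.1
      = (1 - u p.1 p.2) ^ b p.1 * (if p.1 = k then (1 - u p.1 p.2) else 1) := by
    intro p _
    by_cases h : p.1 = k
    · rw [if_pos h, hb, h, Function.update_self]
      rw [← pow_succ]
      congr 1
      omega
    · rw [if_neg h, hb, Function.update_of_ne h, mul_one]
  rw [Fdy, Finset.prod_congr rfl key, Finset.prod_mul_distrib]
  congr 1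
  rw [← Finset.prod_filter]
  have hset : P.filter (fun p : Fin n × Fin n => p.1 = k) = {k} ×ˢ S.erase k := by
    ext ⟨i, j⟩
    simp only [hP, Finset.mem_filter, Finset.mem_product, Finset.mem_erase, Finset.mem_singleton]
    constructor
    · rintro ⟨⟨⟨hi, hj⟩, hij⟩, hik⟩
      exact ⟨hik, by rintro rfl; exact hij (hik ▸ rfl), hj⟩
    · rintro ⟨rfl, hjk, hj⟩
      exact ⟨⟨⟨hk, hj⟩, fun h => hjk h.symm⟩, rfl⟩
  rw [hset, Finset.singleton_product, Finset.prod_map]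
  rfl

-- zero splitting : a k = 0
lemma Fdy_split_zero (S : Finset (Fin n)) (a : Fin n → ℕ) (k : Fin n) (hk : k ∈ S) (hak : a k = 0) :
    Fdy S a = Fdy (S.erase k) a * ∏ i ∈ S.erase k, (1 - u i k) ^ a i := by
  classical
  set P := (S ×ˢ S).filter (fun p : Fin n × Fin n => p.1 ≠ p.2) with hP
  have h1 : Fdy S a = (∏ p ∈ P.filter (fun p => p.1 ≠ k ∧ p.2 ≠ k), (1 - u p.1 p.2) ^ a p.1)
      * ∏ p ∈ P.filter (fun p => ¬(p.1 ≠ k ∧ p.2 ≠ k)), (1 - u p.1 p.2) ^ a p.1 := by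
    rw [Fdy, ← hP, Finset.prod_filter_mul_prod_filter_not]
  have h2 : P.filter (fun p : Fin n × Fin n => p.1 ≠ k ∧ p.2 ≠ k)
      = ((S.erase k) ×ˢ (S.erase k)).filter (fun p : Fin n × Fin n => p.1 ≠ p.2) := by
    ext ⟨i, j⟩
    simp only [hP, Finset.mem_filter, Finset.mem_product, Finset.mem_erase]
    tauto
  -- the rest: pairs with p.1 = k contribute 1 (exponent 0); pairs with p.2 = k, p.1 ≠ k give the H product
  have h3 : ∀ p ∈ P.filter (fun p : Fin n × Fin n => ¬(p.1 ≠ k ∧ p.2 ≠ k)),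
      (1 - u p.1 p.2) ^ a p.1 = (if p.2 = k ∧ p.1 ≠ k then (1 - u p.1 k) ^ a p.1 else 1) := by
    rintro ⟨i, j⟩ hp
    simp only [hP, Finset.mem_filter, Finset.mem_product] at hp
    obtain ⟨⟨⟨hi, hj⟩, hij⟩, hnot⟩ := hp
    by_cases hik : i = k
    · subst hik
      rw [if_neg (by tauto), hak, pow_zero]
    · have hjk : j = k := by tauto
      subst hjk
      rw [if_pos ⟨rfl, hik⟩]
  have h5 : (∏ p ∈ P.filter (fun p : Fin n × Fin n => ¬(p.1 ≠ k ∧ p.2 ≠ k)), (1 - u p.1 p.2) ^ a p.1)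
      = ∏ i ∈ S.erase k, (1 - u i k) ^ a i := by
    rw [Finset.prod_congr rfl h3, ← Finset.prod_filter, Finset.filter_filter]
    have hset : P.filter (fun p : Fin n × Fin n => ¬(p.1 ≠ k ∧ p.2 ≠ k) ∧ (p.2 = k ∧ p.1 ≠ k))
        = (S.erase k) ×ˢ {k} := by
      ext ⟨i, j⟩
      simp only [hP, Finset.mem_filter, Finset.mem_product, Finset.mem_erase, Finset.mem_singleton]
      constructor
      · rintro ⟨⟨⟨hi, hj⟩, hij⟩, _, hjk, hik⟩
        exact ⟨⟨hik, hi⟩, hjk⟩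
      · rintro ⟨⟨hik, hi⟩, rfl⟩
        exact ⟨⟨⟨hi, hk⟩, hik⟩, by tauto⟩
    rw [hset, Finset.product_singleton, Finset.prod_map]
    rfl
  rw [h1, h2, h5]
  rfl

instance qLaurentDomain (n : ℕ) : IsDomain (qLaurent n) := NoZeroDivisors.to_isDomain _

noncomputable abbrev Kf (n : ℕ) := FractionRing (qLaurent n)

noncomputable def φ : qLaurent n →+* Kf n := algebraMap (qLaurent n) (Kf n)

lemma φ_inj : Function.Injective (φ (n := n)) := IsFractionRing.injective _ _

lemma lagrange_sum (S : Finset (Fin n)) (hS : S.Nonempty) :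
    ∑ k ∈ S, (φ (∏ j ∈ S.erase k, (1 - u k j)))⁻¹ = 1 := by
  classical
  set v : Fin n → Kf n := fun i => φ (XX i) with hv
  have hinj : Set.InjOn v S := by
    intro i _ j _ hij
    by_contra h
    exact XX_sub_ne_zero h (by
      have := sub_eq_zero.mpr hij
      rw [hv] at this
      simp only at this
      exact φ_inj (by rw [map_sub, map_zero]; simpa [sub_eq_zero] using hij))
  have hsum := Lagrange.sum_basis hinj hS
  have heval := congrArg (Polynomial.eval (0 : Kf n)) hsum
  rw [Polynomial.eval_finset_sum, Polynomial.eval_one] at heval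
  rw [← heval]
  apply Finset.sum_congr rfl
  intro k hk
  rw [Lagrange.basis, Polynomial.eval_prod]
  rw [map_prod, ← Finset.prod_inv_distrib]
  apply Finset.prod_congr rfl
  intro j hj
  have hjk : j ≠ k := (Finset.mem_erase.mp hj).1
  -- eval 0 basisDivisor (v k) (v j) = (v k - v j)⁻¹ * (0 - v j)
  have h1 : Polynomial.eval 0 (Lagrange.basisDivisor (v k) (v j)) = (v k - v j)⁻¹ * (0 - v j) := by
    simp [Lagrange.basisDivisor]
  have hvj : v j ≠ 0 := fun hc => XX_ne_zero j (φ_inj (by rw [map_zero]; exact hc))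
  have hvjk : v j - v k ≠ 0 := by
    intro hc
    exact XX_sub_ne_zero hjk (φ_inj (by rw [map_sub, map_zero]; exact hc))
  have h2 : φ (1 - u k j) * v j = v j - v k := by
    have := congrArg (φ (n := n)) (one_sub_u_mul_XX (k := k) (j := j))
    rw [map_mul] at this
    rw [map_sub] at this ⊢ <;> try skip
    simpa [hv] using this
  have hu : φ (1 - u k j) = (v j - v k) * (v j)⁻¹ := by
    rw [← h2, mul_assoc, mul_inv_cancel₀ hvj, mul_one]
  rw [h1, hu, mul_inv, inv_inv, zero_sub, ← neg_sub (v j) (v k), inv_neg]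
  ring

lemma Fdy_rec (S : Finset (Fin n)) (hS : S.Nonempty) (a : Fin n → ℕ) (ha : ∀ i ∈ S, 1 ≤ a i) :
    Fdy S a = ∑ k ∈ S, Fdy S (Function.update a k (a k - 1)) := by
  classical
  apply φ_inj
  rw [map_sum]
  have hQ : ∀ k ∈ S, φ (Fdy S (Function.update a k (a k - 1)))
      = φ (Fdy S a) * (φ (∏ j ∈ S.erase k, (1 - u k j)))⁻¹ := by
    intro k hk
    have h1 := Fdy_split_rec S a k hk (ha k hk)
    have hQne : φ (∏ j ∈ S.erase k, (1 - u k j)) ≠ 0 := by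
      intro hc
      have hz : (∏ j ∈ S.erase k, (1 - u k j)) = 0 := φ_inj (by rw [map_zero]; exact hc)
      obtain ⟨j, hj, hzz⟩ := Finset.prod_eq_zero_iff.mp hz
      exact one_sub_u_ne_zero (Ne.symm (Finset.mem_erase.mp hj).1) hzz
    rw [h1, map_mul, mul_assoc, mul_inv_cancel₀ hQne, mul_one]
  rw [Finset.sum_congr rfl hQ, ← Finset.mul_sum, lagrange_sum S hS, mul_one]


lemma mem_zeroAt {k : Fin n} {f : qLaurent n} :
    f ∈ zeroAt k ↔ ∀ μ ∈ f.coeff.support, μ k = 0 := Iff.rfl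

lemma ct_drop (S : Finset (Fin n)) (a : Fin n → ℕ) (k : Fin n) (hk : k ∈ S) (hak : a k = 0) :
    (Fdy S a).coeff 0 = (Fdy (S.erase k) a).coeff 0 := by
  classical
  rw [Fdy_split_zero S a k hk hak]
  set G := Fdy (S.erase k) a with hGdef
  set H := ∏ i ∈ S.erase k, (1 - u i k) ^ a i with hHdef
  have hH : ∀ μ ∈ (H - 1).coeff.support, μ k < 0 := by
    have hHeq : H = ∏ i ∈ S.erase k, (1 + ((1 - u i k) ^ a i - 1)) := by
      apply Finset.prod_congr rfl
      intro i _
      ring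
    rw [hHeq]
    apply supp_prod_one_add
    intro i hi
    have hik : i ≠ k := (Finset.mem_erase.mp hi).1
    have h1 : (1 : qLaurent n) - u i k = 1 + (-(u i k)) := by ring
    rw [h1]
    apply supp_pow_one_add
    intro μ hμ
    have hsupp : μ ∈ (u i k).coeff.support := by
      rw [AddMonoidAlgebra.coeff_neg, Finsupp.support_neg] at hμ
      exact hμ
    have : μ = e i - e k := by
      have := Finsupp.support_single_subset hsupp
      simpa using this
    rw [this, Finsupp.sub_apply, e_apply_ne (Ne.symm hik), e_apply_self]
    norm_num
  have hG : ∀ μ ∈ G.coeff.support, μ k = 0 := by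
    rw [← mem_zeroAt]
    apply Subalgebra.prod_mem
    intro p hp
    apply pow_mem
    apply sub_mem (one_mem _)
    rw [mem_zeroAt]
    intro μ hμ
    simp only [Finset.mem_filter, Finset.mem_product, Finset.mem_erase] at hp
    obtain ⟨⟨⟨h1k, _⟩, h2k, _⟩, _⟩ := hp
    have : μ = e p.1 - e p.2 := by
      have := Finsupp.support_single_subset hμ
      simpa using this
    rw [this, Finsupp.sub_apply, e_apply_ne (Ne.symm h1k), e_apply_ne (Ne.symm h2k)]
    norm_num
  have hsplit : G * H = G + G * (H - 1) := by ring
  rw [hsplit, AddMonoidAlgebra.coeff_add, Finsupp.add_apply]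
  have : (G * (H - 1)).coeff 0 = 0 := by
    by_contra hc
    have h0 : (0 : Fin n →₀ ℤ) ∈ (G * (H - 1)).coeff.support := Finsupp.mem_support_iff.mpr hc
    have := supp_mul_lt k (fun μ hμ => le_of_eq (hG μ hμ)) hH 0 h0
    simp at this
  rw [this, add_zero]

lemma ct_sum {ι : Type*} (T : Finset ι) (f : ι → qLaurent n) :
    (∑ i ∈ T, f i).coeff 0 = ∑ i ∈ T, (f i).coeff 0 := by
  classical
  induction T using Finset.cons_induction with
  | empty => simp
  | cons i T hi ih => rw [Finset.sum_cons, Finset.sum_cons, AddMonoidAlgebra.coeff_add, Finsupp.add_apply, ih]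


lemma Fdy_empty (a : Fin n → ℕ) : Fdy (∅ : Finset (Fin n)) a = 1 := by
  simp [Fdy]

lemma prod_fact_ne_zero (S : Finset (Fin n)) (a : Fin n → ℕ) :
    (∏ i ∈ S, ((a i).factorial : ℚ)) ≠ 0 := by
  apply Finset.prod_ne_zero_iff.mpr
  intro i _
  exact_mod_cast (Nat.factorial_pos (a i)).ne'

lemma ct_main (N : ℕ) : ∀ S : Finset (Fin n), ∀ a : Fin n → ℕ, (∑ i ∈ S, (a i + 1)) ≤ N →
    (Fdy S a).coeff 0 = ((∑ i ∈ S, a i).factorial : ℚ) / ∏ i ∈ S, ((a i).factorial : ℚ) := by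
  classical
  induction N with
  | zero =>
    intro S a hle
    have hS : S = ∅ := by
      by_contra h
      obtain ⟨k, hk⟩ := Finset.nonempty_of_ne_empty h
      have h1 : a k + 1 ≤ ∑ i ∈ S, (a i + 1) :=
        Finset.single_le_sum (f := fun i => a i + 1) (fun i _ => Nat.zero_le _) hk
      omega
    subst hS
    rw [Fdy_empty, one_coeff_zero]
    simp
  | succ N ih =>
    intro S a hle
    rcases Finset.eq_empty_or_nonempty S with hS | hS
    · subst hS
      rw [Fdy_empty, one_coeff_zero]
      simp
    by_cases hz : ∃ k ∈ S, a k = 0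
    · obtain ⟨k, hk, hak⟩ := hz
      rw [ct_drop S a k hk hak]
      have hsum : (a k + 1) + ∑ i ∈ S.erase k, (a i + 1) = ∑ i ∈ S, (a i + 1) :=
        Finset.add_sum_erase S (fun i => a i + 1) hk
      have hmeas : ∑ i ∈ S.erase k, (a i + 1) ≤ N := by omega
      rw [ih (S.erase k) a hmeas]
      rw [Finset.sum_erase S (f := a) hak]
      rw [Finset.prod_erase S (f := fun i => ((a i).factorial : ℚ))
        (by show ((a k).factorial : ℚ) = 1; rw [hak]; norm_num)]
    · push_neg at hz
      have ha : ∀ i ∈ S, 1 ≤ a i := fun i hi => Nat.one_le_iff_ne_zero.mpr (hz i hi)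
      obtain ⟨k0, hk0⟩ := hS
      have hN' : 1 ≤ ∑ i ∈ S, a i :=
        le_trans (ha k0 hk0) (Finset.single_le_sum (f := a) (fun i _ => Nat.zero_le _) hk0)
      rw [Fdy_rec S ⟨k0, hk0⟩ a ha, ct_sum]
      have hterm : ∀ k ∈ S, (Fdy S (Function.update a k (a k - 1))).coeff 0
          = (a k : ℚ) * (((∑ i ∈ S, a i) - 1).factorial : ℚ) / ∏ i ∈ S, ((a i).factorial : ℚ) := by
        intro k hk
        set b := Function.update a k (a k - 1) with hb
        have hak := ha k hk
        have herase : a k + ∑ i ∈ S.erase k, a i = ∑ i ∈ S, a i :=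
          Finset.add_sum_erase S a hk
        have herase' : a k + ∑ i ∈ S \ {k}, a i = ∑ i ∈ S, a i := by
          rw [← Finset.erase_eq]; exact herase
        have hsumb : ∑ i ∈ S, b i = (∑ i ∈ S, a i) - 1 := by
          rw [hb, Finset.sum_update_of_mem hk]
          omega
        have hmeasb : ∑ i ∈ S, (b i + 1) ≤ N := by
          have h1 : ∑ i ∈ S, (b i + 1) = (∑ i ∈ S, b i) + S.card := by
            rw [Finset.sum_add_distrib, Finset.sum_const, smul_eq_mul, mul_one]
          have h2 : ∑ i ∈ S, (a i + 1) = (∑ i ∈ S, a i) + S.card := by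
            rw [Finset.sum_add_distrib, Finset.sum_const, smul_eq_mul, mul_one]
          omega
        rw [ih S b hmeasb, hsumb]
        have hfun : ∀ i ∈ S, (b i).factorial
            = Function.update (fun i => (a i).factorial) k ((a k - 1).factorial) i := by
          intro i _
          by_cases h : i = k
          · subst h; simp [hb]
          · simp [hb, Function.update_of_ne h]
        have hprodbn : (a k) * ∏ i ∈ S, (b i).factorial = ∏ i ∈ S, (a i).factorial := by
          rw [Finset.prod_congr rfl hfun, Finset.prod_update_of_mem hk, ← Finset.erase_eq,
            ← mul_assoc, Nat.mul_factorial_pred (Nat.one_le_iff_ne_zero.mp hak),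
            Finset.mul_prod_erase S (fun i => (a i).factorial) hk]
        have hprodb : (∏ i ∈ S, ((a i).factorial : ℚ)) = (a k : ℚ) * ∏ i ∈ S, ((b i).factorial : ℚ) := by
          rw [← Nat.cast_prod, ← hprodbn]
          push_cast
          ring
        rw [hprodb]
        have hbne := prod_fact_ne_zero S b
        have hakne : (a k : ℚ) ≠ 0 := by exact_mod_cast Nat.one_le_iff_ne_zero.mp hak
        field_simp
      rw [Finset.sum_congr rfl hterm, ← Finset.sum_div, ← Finset.sum_mul]
      congr 1
      have hcast : (∑ k ∈ S, (a k : ℚ)) = ((∑ i ∈ S, a i : ℕ) : ℚ) := by push_cast; rfl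
      rw [hcast]
      exact_mod_cast congrArg (Nat.cast (R := ℚ)) (Nat.mul_factorial_pred (Nat.one_le_iff_ne_zero.mp hN'))

end Dyson

/-- Dyson's conjecture (Gunson, Wilson, Good): the constant term of
`∏_{i≠j} (1 - xᵢ/x_j)^{aᵢ}` equals the multinomial coefficient
`(a₁+⋯+aₙ)! / (a₁!⋯aₙ!)`. -/
theorem dyson_conjecture (n : ℕ) (a : Fin n → ℕ) :
    (∏ p ∈ Finset.univ.filter (fun p : Fin n × Fin n => p.1 ≠ p.2),
        (1 - lmono (Finsupp.single p.1 1 - Finsupp.single p.2 1) 1) ^ (a p.1) : qLaurent n).coeff 0 =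
      ((∑ i, a i).factorial : ℚ) / ∏ i, ((a i).factorial : ℚ) := by
  have h := Dyson.ct_main (n := n) (∑ i, (a i + 1)) Finset.univ a le_rfl
  have hset : (Finset.univ : Finset (Fin n × Fin n)).filter (fun p => p.1 ≠ p.2)
      = ((Finset.univ ×ˢ Finset.univ).filter (fun p : Fin n × Fin n => p.1 ≠ p.2)) := by
    rw [Finset.univ_product_univ]
  rw [hset]
  simp only [Dyson.Fdy, Dyson.u, Dyson.e] at h
  exact h
end

section
/- Let q be an indeterminate, a₁,…,aₙ positive integers, σ = ∑aᵢ, σᵢ = ∑_{j<i}a_j, F as in the q-Dyson setup, and Aᵢ = {1,q,…,q^{σ−aᵢ}}. Then the coefficient of ∏ᵢ xᵢ^{σ−aᵢ} in F equals F(q^{σ₁},…,q^{σₙ})/∏ᵢ φᵢ'(q^{σᵢ}), where φᵢ(z) = ∏_{a∈Aᵢ}(z−a). -/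
open Finset MvPolynomial

/-- The homogeneous polynomial form of the q-Dyson product:
`F = ∏_{i<j} [∏_{t=0}^{aᵢ-1}(x_j - xᵢ qᵗ) · ∏_{t=1}^{a_j}(xᵢ - x_j qᵗ)]`. -/
noncomputable def qDysonPoly (n : ℕ) (a : Fin n → ℕ) : MvPolynomial (Fin n) (RatFunc ℚ) :=
  ∏ p ∈ Finset.univ.filter (fun p : Fin n × Fin n => p.1 < p.2),
    ((∏ t ∈ Finset.range (a p.1), (X p.2 - C ((RatFunc.X : RatFunc ℚ) ^ t) * X p.1)) *
     (∏ t ∈ Finset.range (a p.2), (X p.1 - C ((RatFunc.X : RatFunc ℚ) ^ (t + 1)) * X p.2)))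

/-- The grid polynomial `φᵢ(z) = (z - 1)(z - q)⋯(z - q^{σ-aᵢ})` for the grid
`Aᵢ = {1, q, …, q^{σ-aᵢ}}`. -/
noncomputable def gridPoly (n : ℕ) (a : Fin n → ℕ) (i : Fin n) : Polynomial (RatFunc ℚ) :=
  ∏ t ∈ Finset.range ((∑ j, a j) - a i + 1),
    (Polynomial.X - Polynomial.C ((RatFunc.X : RatFunc ℚ) ^ t))

section Aux

variable {K : Type*} [Field K] [DecidableEq K]

open Polynomial in
lemma coeff_lag_basis (s : Finset K) {x : K} (hx : x ∈ s) :
    (Lagrange.basis s id x).coeff (s.card - 1) = ∏ y ∈ s.erase x, (x - y)⁻¹ := by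
  have hinj : Set.InjOn (id : K → K) s := Set.injOn_id _
  have hnd := Lagrange.natDegree_basis hinj hx
  rw [← hnd, ← Polynomial.leadingCoeff, Lagrange.basis, leadingCoeff_prod]
  refine prod_congr rfl fun y hy => ?_
  have hxy : (x : K) ≠ y := fun h => (mem_erase.mp hy).1 h.symm
  simp [Lagrange.basisDivisor, leadingCoeff_mul, leadingCoeff_X_sub_C]

open Polynomial in
lemma lag_sum (s : Finset K) {k : ℕ} (hk : k < s.card) :
    ∑ x ∈ s, x ^ k * (∏ y ∈ s.erase x, (x - y))⁻¹
      = if k = s.card - 1 then 1 else 0 := by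
  have hinj : Set.InjOn (id : K → K) s := Set.injOn_id _
  have hdeg : ((Polynomial.X : K[X]) ^ k).degree < s.card :=
    lt_of_le_of_lt (Polynomial.degree_X_pow_le k) (by exact_mod_cast hk)
  have h := Lagrange.eq_interpolate hinj hdeg
  have h2 := congrArg (fun p : K[X] => p.coeff (s.card - 1)) h
  simp only [Lagrange.interpolate_apply, Polynomial.finset_sum_coeff, Polynomial.coeff_C_mul,
    Polynomial.eval_pow, Polynomial.eval_X, id_eq, Polynomial.coeff_X_pow] at h2
  have h3 : ∑ x ∈ s, x ^ k * (Lagrange.basis s id x).coeff (s.card - 1)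
      = ∑ x ∈ s, x ^ k * (∏ y ∈ s.erase x, (x - y))⁻¹ :=
    sum_congr rfl fun x hx => by rw [coeff_lag_basis s hx, prod_inv_distrib]
  rw [← h3, ← h2]
  by_cases h : k = s.card - 1 <;> simp [h, eq_comm]

lemma coeff_formula (n : ℕ) (A : Fin n → Finset K) (hA : ∀ i, (A i).Nonempty)
    (f : MvPolynomial (Fin n) K)
    (hdeg : f.totalDegree ≤ ∑ i, ((A i).card - 1)) :
    f.coeff (Finsupp.equivFunOnFinite.symm (fun i => (A i).card - 1)) =
      ∑ c ∈ Fintype.piFinset A, MvPolynomial.eval c f *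
        (∏ i, ∏ y ∈ (A i).erase (c i), (c i - y))⁻¹ := by
  set d : Fin n → ℕ := fun i => (A i).card - 1 with hd
  have key : ∀ c ∈ Fintype.piFinset A, MvPolynomial.eval c f *
        (∏ i, ∏ y ∈ (A i).erase (c i), (c i - y))⁻¹
      = ∑ e ∈ f.support, f.coeff e *
        ∏ i, (c i ^ e i * (∏ y ∈ (A i).erase (c i), (c i - y))⁻¹) := by
    intro c hc
    rw [MvPolynomial.eval_eq', sum_mul]
    refine sum_congr rfl fun e he => ?_
    rw [mul_assoc, ← prod_inv_distrib, ← prod_mul_distrib]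
  rw [sum_congr rfl key, sum_comm]
  have swap : ∀ e : Fin n →₀ ℕ,
      ∑ c ∈ Fintype.piFinset A, f.coeff e *
        ∏ i, (c i ^ e i * (∏ y ∈ (A i).erase (c i), (c i - y))⁻¹)
      = f.coeff e * ∏ i, ∑ x ∈ A i, (x ^ e i * (∏ y ∈ (A i).erase x, (x - y))⁻¹) := by
    intro e
    rw [← mul_sum, Finset.prod_univ_sum]
  rw [sum_congr rfl fun e _ => swap e]
  have val : ∀ e ∈ f.support,
      (∏ i, ∑ x ∈ A i, (x ^ e i * (∏ y ∈ (A i).erase x, (x - y))⁻¹))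
        = if e = Finsupp.equivFunOnFinite.symm d then 1 else 0 := by
    intro e he
    have hsum : ∑ i, e i ≤ ∑ i, d i := by
      refine le_trans ?_ hdeg
      refine le_trans ?_ (MvPolynomial.le_totalDegree he)
      exact le_of_eq (Finsupp.sum_fintype e (fun _ m => m) (fun _ => rfl)).symm
    by_cases heq : e = Finsupp.equivFunOnFinite.symm d
    · subst heq
      rw [if_pos rfl]
      refine prod_eq_one fun i _ => ?_
      have hlt : d i < (A i).card := Nat.sub_lt (card_pos.mpr (hA i)) one_pos
      have := lag_sum (A i) hlt
      rw [if_pos rfl] at this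
      simpa using this
    · rw [if_neg heq]
      have : ∃ j, e j < d j := by
        by_contra hno
        push_neg at hno
        have : e = Finsupp.equivFunOnFinite.symm d := by
          ext i
          have h1 : d i ≤ e i := hno i
          by_contra hne
          have : d i < e i := lt_of_le_of_ne h1 (fun h => hne (by simp [← h, hd]))
          have : ∑ i, d i < ∑ i, e i :=
            Finset.sum_lt_sum (fun i _ => hno i) ⟨i, mem_univ i, this⟩
          omega
        exact heq this
      obtain ⟨j, hj⟩ := this
      refine prod_eq_zero (mem_univ j) ?_
      have hlt : e j < (A j).card := lt_of_lt_of_le hj (Nat.sub_le _ _)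
      have hdj : d j = (A j).card - 1 := rfl
      rw [lag_sum (A j) hlt, if_neg (by omega)]
  rw [sum_congr rfl fun e he => by rw [val e he]]
  simp only [mul_ite, mul_one, mul_zero]
  rw [Finset.sum_ite_eq' f.support]
  split_ifs with h
  · rfl
  · exact MvPolynomial.notMem_support_iff.mp h

open Polynomial in
lemma deriv_eval (s : Finset ℕ) (v : ℕ → K) (hv : Function.Injective v) {b : ℕ}
    (hb : b ∈ s) :
    Polynomial.eval (v b)
        (Polynomial.derivative (∏ t ∈ s, (Polynomial.X - Polynomial.C (v t))))
      = ∏ t ∈ s.erase b, (v b - v t) := by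
  have h1 : (∏ t ∈ s, (Polynomial.X - Polynomial.C (v t)))
      = (Multiset.map (fun a => Polynomial.X - Polynomial.C a) (s.val.map v)).prod := by
    rw [Multiset.map_map]
    rfl
  rw [h1, Polynomial.eval_multiset_prod_X_sub_C_derivative
    (by rw [Multiset.mem_map]; exact ⟨b, hb, rfl⟩)]
  rw [← Multiset.map_erase _ hv b s.val, Multiset.map_map]
  rw [← Finset.erase_val]
  rfl

end Aux

lemma sum_Iio_fin {M : Type*} [AddCommMonoid M] {n : ℕ} (f : Fin n → M) (i : Fin n) :
    ∑ j ∈ Iio i, f j = ∑ t ∈ range i.val, (if h : t < n then f ⟨t, h⟩ else 0) := by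
  refine Finset.sum_nbij' (fun j => (j : ℕ)) (fun t => if h : t < n then ⟨t, h⟩ else i)
    ?_ ?_ ?_ ?_ ?_
  · intro j hj; exact mem_range.mpr (Fin.lt_def.mp (mem_Iio.mp hj))
  · intro t ht
    have htn : t < n := lt_trans (mem_range.mp ht) i.isLt
    simp only [dif_pos htn, mem_Iio, Fin.lt_def]
    exact mem_range.mp ht
  · intro j hj; simp
  · intro t ht
    have htn : t < n := lt_trans (mem_range.mp ht) i.isLt
    simp [htn]
  · intro j hj
    have hjn : (j : ℕ) < n := j.isLt
    simp [hjn]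

lemma combi {m : ℕ} (a β : Fin (m + 1) → ℕ) (ha : ∀ i, 0 < a i)
    (H : ∀ i j : Fin (m + 1), i < j → β i + a i ≤ β j ∨ β j + a j + 1 ≤ β i)
    (hb : ∀ i, β i + a i ≤ ∑ j, a j) :
    ∀ i, β i = ∑ j ∈ Iio i, a j := by
  have hinj : Function.Injective β := by
    intro i j hij
    by_contra hne
    rcases lt_or_gt_of_ne hne with h | h
    · have := ha i; have := ha j; rcases H i j h with h' | h' <;> omega
    · have := ha i; have := ha j; rcases H j i h with h' | h' <;> omega
  set π := Tuple.sort β with hπ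
  have hg : StrictMono (β ∘ π) :=
    (Tuple.monotone_sort β).strictMono_of_injective (hinj.comp π.injective)
  have step : ∀ k : ℕ, (hk : k + 1 < m + 1) →
      (β (π ⟨k, by omega⟩) + a (π ⟨k, by omega⟩) ≤ β (π ⟨k+1, hk⟩)) ∧
      (π ⟨k+1, hk⟩ < π ⟨k, by omega⟩ →
        β (π ⟨k, by omega⟩) + a (π ⟨k, by omega⟩) + 1 ≤ β (π ⟨k+1, hk⟩)) := by
    intro k hk
    set i := π ⟨k, by omega⟩ with hi
    set j := π ⟨k+1, hk⟩ with hj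
    have hlt : β i < β j := hg (by simp [Fin.lt_def])
    rcases lt_trichotomy i j with h | h | h
    · rcases H i j h with h' | h'
      · exact ⟨h', fun hc => absurd hc (not_lt.mpr (le_of_lt h))⟩
      · omega
    · exact absurd (π.injective h) (by simp [Fin.ext_iff])
    · rcases H j i h with h' | h'
      · omega
      · exact ⟨by omega, fun _ => h'⟩
  set A' : ℕ → ℕ := fun t => if h : t < m + 1 then a (π ⟨t, h⟩) else 0 with hA'
  set G : ℕ → ℕ := fun t => if h : t < m + 1 then β (π ⟨t, h⟩) else 0 with hG
  have stepG : ∀ k, k + 1 < m + 1 → G k + A' k ≤ G (k + 1) := by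
    intro k hk
    have h1 : k < m + 1 := by omega
    simp only [hG, hA', dif_pos hk, dif_pos h1]
    exact (step k hk).1
  have U : ∀ k s, k + s < m + 1 → G k + ∑ t ∈ Ico k (k + s), A' t ≤ G (k + s) := by
    intro k s
    induction s with
    | zero => intro _; simp
    | succ s ih =>
      intro hs
      have h1 : k + s < m + 1 := by omega
      have h2 := ih h1
      have h3 := stepG (k + s) (by omega)
      rw [show k + (s+1) = (k+s) + 1 by omega] at *
      rw [Finset.sum_Ico_succ_top (by omega)]
      omega
  have total : ∑ t ∈ range (m + 1), A' t = ∑ j, a j := by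
    rw [← Fin.sum_univ_eq_sum_range A' (m + 1)]
    calc ∑ i : Fin (m+1), A' ↑i = ∑ i : Fin (m+1), a (π i) :=
          Fintype.sum_congr _ _ (fun i => by simp [hA', i.isLt]; intro h; exact absurd h (by have := i.isLt; omega))
      _ = ∑ j, a j := Equiv.sum_comp π a
  have hmlt : m < m + 1 := by omega
  have top : G m ≤ ∑ t ∈ range m, A' t := by
    have h1 := hb (π ⟨m, hmlt⟩)
    have h2 : ∑ t ∈ range (m+1), A' t = ∑ t ∈ range m, A' t + A' m :=
      Finset.sum_range_succ A' m
    have h3 : A' m = a (π ⟨m, hmlt⟩) := dif_pos hmlt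
    have h4 : G m = β (π ⟨m, hmlt⟩) := dif_pos hmlt
    rw [total, h3] at h2
    rw [h4]
    omega
  have exact_ : ∀ k, k < m + 1 → G k = ∑ t ∈ range k, A' t := by
    intro k hk
    have h1 : G 0 + ∑ t ∈ Ico 0 (0 + k), A' t ≤ G (0 + k) := U 0 k (by omega)
    have h2 : G k + ∑ t ∈ Ico k (k + (m - k)), A' t ≤ G (k + (m - k)) :=
      U k (m - k) (by omega)
    rw [show k + (m - k) = m by omega] at h2
    have h3 : ∑ t ∈ range k, A' t + ∑ t ∈ Ico k m, A' t = ∑ t ∈ range m, A' t :=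
      Finset.sum_range_add_sum_Ico _ (by omega)
    simp only [zero_add, ← Finset.range_eq_Ico] at h1 h2
    omega
  have hmono : StrictMono ⇑π := by
    rw [Fin.strictMono_iff_lt_succ]
    intro i
    by_contra hcon
    push_neg at hcon
    have hne : π i.succ ≠ π i.castSucc := fun h => by
      have := π.injective h
      simp [Fin.ext_iff] at this
    have hlt : π i.succ < π i.castSucc := lt_of_le_of_ne hcon hne
    have hk : (i : ℕ) + 1 < m + 1 := by omega
    have hcs : i.castSucc = (⟨(i : ℕ), by omega⟩ : Fin (m+1)) := rfl
    have hsc : i.succ = (⟨(i : ℕ) + 1, hk⟩ : Fin (m+1)) := rfl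
    have h1 := (step i hk).2 (by rw [← hcs, ← hsc]; exact hlt)
    have e1 := exact_ i (by omega)
    have e2 := exact_ ((i : ℕ) + 1) hk
    rw [Finset.sum_range_succ] at e2
    have hiN : (i : ℕ) < m + 1 := by omega
    simp only [hG, hA', dif_pos hk, dif_pos hiN] at e1 e2
    omega
  have hπid : ⇑π = id :=
    (StrictMono.range_inj hmono strictMono_id).mp (by rw [π.surjective.range_eq, Set.range_id])
  intro i
  have e := exact_ i i.isLt
  have hGi : G i = β i := by
    simp only [hG, dif_pos i.isLt]
    congr 1
    rw [show π ⟨(i : ℕ), i.isLt⟩ = id ⟨(i : ℕ), i.isLt⟩ from congrFun hπid _]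
    rfl
  rw [sum_Iio_fin a i, ← hGi, e]
  refine Finset.sum_congr rfl fun t ht => ?_
  have htN : t < m + 1 := lt_trans (mem_range.mp ht) i.isLt
  simp only [hA', dif_pos htN]
  rw [show π ⟨t, htN⟩ = id ⟨t, htN⟩ from congrFun hπid _]
  rfl

lemma vanish {n : ℕ} (a : Fin n → ℕ) (ha : ∀ i, 0 < a i) (β : Fin n → ℕ)
    (hble : ∀ i, β i + a i ≤ ∑ j, a j)
    (hne : β ≠ fun i => ∑ j ∈ Iio i, a j) :
    MvPolynomial.eval (fun i => (RatFunc.X : RatFunc ℚ) ^ β i) (qDysonPoly n a) = 0 := by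
  by_contra h0
  rw [qDysonPoly, map_prod] at h0
  have hpair := Finset.prod_ne_zero_iff.mp h0
  have H : ∀ i j, i < j → β i + a i ≤ β j ∨ β j + a j + 1 ≤ β i := by
    intro i j hij
    have hp := hpair (i, j) (by simp [hij])
    rw [map_mul] at hp
    rcases mul_ne_zero_iff.mp hp with ⟨hp1, hp2⟩
    rw [map_prod] at hp1 hp2
    have h1 := Finset.prod_ne_zero_iff.mp hp1
    have h2 := Finset.prod_ne_zero_iff.mp hp2
    have k1 : ∀ t, t < a i → β j ≠ t + β i := by
      intro t ht heq
      apply h1 t (mem_range.mpr ht)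
      simp only [map_sub, map_mul, MvPolynomial.eval_X, MvPolynomial.eval_C]
      rw [heq, pow_add, sub_self]
    have k2 : ∀ t, t < a j → β i ≠ t + 1 + β j := by
      intro t ht heq
      apply h2 t (mem_range.mpr ht)
      simp only [map_sub, map_mul, MvPolynomial.eval_X, MvPolynomial.eval_C]
      rw [heq, pow_add, sub_self]
    rcases le_or_gt (β i + a i) (β j) with h | h
    · exact Or.inl h
    rcases le_or_gt (β j + a j + 1) (β i) with h' | h'
    · exact Or.inr h'
    exfalso
    rcases le_or_gt (β i) (β j) with hc | hc
    · exact (k1 (β j - β i) (by omega)) (by omega)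
    · exact (k2 (β i - β j - 1) (by omega)) (by omega)
  cases n with
  | zero => exact hne (funext fun i => i.elim0)
  | succ m => exact hne (funext fun i => combi a β ha H hble i)

lemma pair_sum {n : ℕ} (a : Fin n → ℕ) :
    ∑ p ∈ Finset.univ.filter (fun p : Fin n × Fin n => p.1 < p.2), (a p.1 + a p.2)
      = ∑ i, ((∑ j, a j) - a i) := by
  classical
  set S := Finset.univ.filter (fun p : Fin n × Fin n => p.1 < p.2) with hS
  set S' := Finset.univ.filter (fun p : Fin n × Fin n => p.2 < p.1) with hS'
  have h1 : ∑ p ∈ S, (a p.1 + a p.2) = ∑ p ∈ S, a p.1 + ∑ p ∈ S, a p.2 :=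
    Finset.sum_add_distrib
  have h2 : ∑ p ∈ S, a p.2 = ∑ p ∈ S', a p.1 := by
    refine Finset.sum_nbij' (fun p => (p.2, p.1)) (fun p => (p.2, p.1)) ?_ ?_ ?_ ?_ ?_ <;>
      simp [hS, hS']
  have hdisj : Disjoint S S' := by
    rw [Finset.disjoint_filter]
    intro p _ hp
    exact not_lt.mpr (le_of_lt hp)
  have h3 : S ∪ S' = Finset.univ.filter (fun p : Fin n × Fin n => p.1 ≠ p.2) := by
    ext p
    simp only [hS, hS', Finset.mem_union, mem_filter, mem_univ, true_and]
    constructor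
    · rintro (h | h)
      · exact ne_of_lt h
      · exact (ne_of_lt h).symm
    · intro h
      exact lt_or_gt_of_ne h
  have h4 : ∑ p ∈ S, a p.1 + ∑ p ∈ S', a p.1
      = ∑ p ∈ Finset.univ.filter (fun p : Fin n × Fin n => p.1 ≠ p.2), a p.1 := by
    rw [← Finset.sum_union hdisj, h3]
  have h5 : ∑ p ∈ Finset.univ.filter (fun p : Fin n × Fin n => p.1 ≠ p.2), a p.1
        + ∑ p ∈ Finset.univ.filter (fun p : Fin n × Fin n => p.1 = p.2), a p.1
      = ∑ p : Fin n × Fin n, a p.1 := by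
    rw [← Finset.sum_filter_add_sum_filter_not Finset.univ
      (fun p : Fin n × Fin n => p.1 ≠ p.2) (fun p => a p.1)]
    congr 1
    refine Finset.sum_congr (Finset.filter_congr fun p _ => ?_) fun _ _ => rfl
    simp
  have h6 : ∑ p ∈ Finset.univ.filter (fun p : Fin n × Fin n => p.1 = p.2), a p.1
      = ∑ j, a j := by
    refine Finset.sum_nbij' (fun p => p.1) (fun i => (i, i)) ?_ ?_ ?_ ?_ ?_ <;>
      simp +contextual [Prod.ext_iff]
  have h7 : ∑ p : Fin n × Fin n, a p.1 = n * ∑ j, a j := by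
    rw [Fintype.sum_prod_type]
    simp [Finset.sum_const, mul_comm, Finset.mul_sum]
  have h8 : ∑ i, ((∑ j, a j) - a i) + ∑ j, a j = n * ∑ j, a j := by
    have hle : ∀ i : Fin n, a i ≤ ∑ j, a j := fun i =>
      Finset.single_le_sum (fun j _ => Nat.zero_le (a j)) (mem_univ i)
    rw [← Finset.sum_add_distrib]
    have : ∀ i : Fin n, (∑ j, a j) - a i + a i = ∑ j, a j := fun i => by
      have := hle i; omega
    rw [Finset.sum_congr rfl fun i _ => this i]
    simp [Finset.sum_const, mul_comm]
  omega

open Polynomial in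
lemma Xpow_inj : Function.Injective (fun t : ℕ => (RatFunc.X : RatFunc ℚ) ^ t) := by
  intro s t h
  simp only at h
  rw [← RatFunc.algebraMap_X, ← map_pow, ← map_pow] at h
  have h2 := RatFunc.algebraMap_injective ℚ h
  have := congrArg Polynomial.natDegree h2
  simpa using this

lemma qDyson_totalDegree {n : ℕ} (a : Fin n → ℕ) :
    (qDysonPoly n a).totalDegree ≤ ∑ i, ((∑ j, a j) - a i) := by
  rw [← pair_sum a]
  refine le_trans (MvPolynomial.totalDegree_finset_prod _ _) (Finset.sum_le_sum ?_)
  intro p hp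
  refine le_trans (MvPolynomial.totalDegree_mul _ _) (add_le_add ?_ ?_) <;>
  · refine le_trans (MvPolynomial.totalDegree_finset_prod _ _) ?_
    refine le_trans (Finset.sum_le_sum (g := fun _ => 1) fun t _ => ?_) (by simp)
    rw [sub_eq_add_neg]
    refine le_trans (MvPolynomial.totalDegree_add _ _) (max_le (by simp) ?_)
    rw [MvPolynomial.totalDegree_neg]
    refine le_trans (MvPolynomial.totalDegree_mul _ _) ?_
    rw [MvPolynomial.totalDegree_C, MvPolynomial.totalDegree_X]

/-- Collapse of the interpolation formula for the q-Dyson polynomial: the coefficient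
of `∏ᵢ xᵢ^{σ-aᵢ}` in `F` equals `F(q^{σ₁},…,q^{σₙ}) / ∏ᵢ φᵢ'(q^{σᵢ})`, where
`σᵢ = ∑_{j<i} a_j` and `σ = ∑ a_j`. -/
theorem q_dyson_coefficient_collapse
    (n : ℕ) (a : Fin n → ℕ) (ha : ∀ i, 0 < a i) :
    (qDysonPoly n a).coeff (Finsupp.equivFunOnFinite.symm (fun i => (∑ j, a j) - a i)) =
      MvPolynomial.eval (fun i => (RatFunc.X : RatFunc ℚ) ^ (∑ j ∈ Finset.Iio i, a j))
          (qDysonPoly n a) /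
        ∏ i, Polynomial.eval ((RatFunc.X : RatFunc ℚ) ^ (∑ j ∈ Finset.Iio i, a j))
          (Polynomial.derivative (gridPoly n a i)) := by
  classical
  set q : RatFunc ℚ := RatFunc.X with hq
  set σ : ℕ := ∑ j, a j with hσ
  set A : Fin n → Finset (RatFunc ℚ) :=
    fun i => (range (σ - a i + 1)).image (fun t => q ^ t) with hA
  have hcard : ∀ i, (A i).card = σ - a i + 1 := fun i => by
    rw [hA]
    rw [Finset.card_image_of_injective _ Xpow_inj, Finset.card_range]
  have hAne : ∀ i, (A i).Nonempty := fun i =>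
    ⟨q ^ 0, mem_image.mpr ⟨0, mem_range.mpr (by omega), rfl⟩⟩
  have hd : (fun i => (A i).card - 1) = fun i => σ - a i := funext fun i => by
    rw [hcard]; omega
  have hdeg : (qDysonPoly n a).totalDegree ≤ ∑ i, ((A i).card - 1) := by
    rw [hd]; exact qDyson_totalDegree a
  have hcf := coeff_formula n A hAne _ hdeg
  rw [hd] at hcf
  rw [hcf]
  set σf : Fin n → ℕ := fun i => ∑ j ∈ Iio i, a j with hσf
  have hσle : ∀ i, σf i + a i ≤ σ := by
    intro i
    have h1 : σf i + a i = ∑ j ∈ insert i (Iio i), a j := by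
      rw [Finset.sum_insert (by simp), add_comm]
    rw [h1, hσ]
    exact Finset.sum_le_sum_of_subset (Finset.subset_univ _)
  set c₀ : Fin n → RatFunc ℚ := fun i => q ^ σf i with hc₀
  have hc₀mem : c₀ ∈ Fintype.piFinset A := Fintype.mem_piFinset.mpr fun i =>
    mem_image.mpr ⟨σf i, mem_range.mpr (by have := hσle i; have := ha i; omega), rfl⟩
  rw [Finset.sum_eq_single c₀ ?_ (fun h => absurd hc₀mem h)]
  · rw [div_eq_mul_inv]
    refine congrArg₂ (· * ·) rfl (congrArg Inv.inv (Finset.prod_congr rfl fun i _ => ?_))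
    have hb : σf i ∈ range (σ - a i + 1) :=
      mem_range.mpr (by have := hσle i; have := ha i; omega)
    rw [gridPoly]
    rw [deriv_eval (range (σ - a i + 1)) (fun t => q ^ t) Xpow_inj hb]
    have himg : (A i).erase (c₀ i)
        = ((range (σ - a i + 1)).erase (σf i)).image (fun t => q ^ t) := by
      rw [hA, hc₀]
      exact (Finset.image_erase Xpow_inj _ _).symm
    rw [himg, Finset.prod_image (fun s _ t _ h => Xpow_inj h)]
  · intro c hc hnec
    have hmem := Fintype.mem_piFinset.mp hc
    have hch : ∀ i, ∃ t, t ∈ range (σ - a i + 1) ∧ q ^ t = c i := by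
      intro i
      obtain ⟨t, ht, he⟩ := mem_image.mp (hmem i)
      exact ⟨t, ht, he⟩
    choose β hβmem hβeq using hch
    have hcfn : c = fun i => q ^ β i := funext fun i => (hβeq i).symm
    have hble : ∀ i, β i + a i ≤ σ := fun i => by
      have h1 := mem_range.mp (hβmem i)
      have h2 : a i ≤ σ := hσ ▸ Finset.single_le_sum (fun j _ => Nat.zero_le (a j)) (mem_univ i)
      omega
    have hβne : β ≠ fun i => ∑ j ∈ Iio i, a j := by
      intro h
      apply hnec
      rw [hcfn, hc₀, h]
    rw [hcfn, vanish a ha β hble hβne, zero_mul]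
end
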